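/- arXiv:1512.07467 — 7 statements merged into one kernel-verified Lean document; each statement's English description precedes it below -/
import Mathlib

section
/- Let q ≥ 2 be a prime power, n ≥ 2 with n not divisible by 3, and i with gcd(i, 2n) = 1 and gcd(i, 3n) = 3. Let a ∈ GF(q^{3n})* with N_{q^{3n}/q^3}(a) ∉ F_q, and let ω ∈ GF(q^{2n}) \ GF(q^n). Then the F_q-linear set L_U = { GF(q^{2n})·(a x^{q^i} + xω) : x ∈ GF(q^{3n})* } in PG(2, q^{2n}) = PG(GF(q^{6n}), GF(q^{2n})) is scattered of rank 3n. -/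
private lemma powfix_mul {K : Type*} [Monoid K] (q A : ℕ) (g : K) (h : g ^ q ^ A = g) (k : ℕ) :
    g ^ q ^ (A * k) = g := by
  induction k with
  | zero => simp
  | succ k ih =>
      calc g ^ q ^ (A * (k + 1)) = (g ^ q ^ (A * k)) ^ q ^ A := by
            rw [← pow_mul, ← pow_add, Nat.mul_succ]
      _ = g := by rw [ih, h]

private lemma powfix_gcd {K : Type*} [Monoid K] (q : ℕ) :
    ∀ (A B : ℕ) (g : K), g ^ q ^ A = g → g ^ q ^ B = g → g ^ q ^ (Nat.gcd A B) = g := fun A B =>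
  Nat.gcd.induction A B (fun n g _ h => by simpa using h)
    (fun m n hm ih g hA hB => by
      rw [Nat.gcd_rec]
      refine ih g ?_ hA
      calc g ^ q ^ (n % m) = (g ^ q ^ (m * (n / m))) ^ q ^ (n % m) := by
            rw [powfix_mul q m g hA (n / m)]
      _ = g ^ q ^ (m * (n / m) + n % m) := by rw [← pow_mul, ← pow_add]
      _ = g := by rw [Nat.div_add_mod]; exact hB)

private lemma key_dvd (q n : ℕ) (hq : 2 ≤ q) (hn3 : ¬ (3 ∣ n)) :
    (q ^ n - 1) * (q ^ 3 - 1) ∣ (q ^ (3 * n) - 1) * (q - 1) := by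
  have h1 : (1:ℕ) ≤ q := by omega
  have hp1 : (1:ℕ) ≤ q ^ n := Nat.one_le_pow _ _ (by omega)
  have hp2 : (1:ℕ) ≤ q ^ 3 := Nat.one_le_pow _ _ (by omega)
  have hp3 : (1:ℕ) ≤ q ^ (3 * n) := Nat.one_le_pow _ _ (by omega)
  zify [h1, hp1, hp2, hp3]
  set X : ℤ := (q : ℤ) with hX
  set r := n % 3 with hr'
  set k := n / 3 with hk'
  have hr : r = 1 ∨ r = 2 := by
    have : n % 3 ≠ 0 := fun h => hn3 (Nat.dvd_of_mod_eq_zero h)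
    omega
  have hMk : (X ^ 2 + X + 1) ∣ (X ^ 3) ^ k - 1 := by
    refine dvd_trans (b := X ^ 3 - 1) ⟨X - 1, by ring⟩ ?_
    simpa using sub_dvd_pow_sub_pow (X ^ 3) 1 k
  have hMk2 : (X ^ 2 + X + 1) ∣ ((X ^ 3) ^ k) ^ 2 - 1 := by
    refine dvd_trans hMk ?_
    simpa using sub_dvd_pow_sub_pow ((X ^ 3) ^ k) 1 2
  have hXn : X ^ n = (X ^ 3) ^ k * X ^ r := by
    rw [← pow_mul, ← pow_add]; congr 1; omega
  have hX2n : X ^ (2 * n) = ((X ^ 3) ^ k) ^ 2 * X ^ (2 * r) := by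
    rw [← pow_mul, ← pow_mul, ← pow_add]; congr 1; omega
  have d1 : (X ^ 2 + X + 1) ∣ X ^ n - X ^ r := by
    have h : X ^ n - X ^ r = X ^ r * ((X ^ 3) ^ k - 1) := by rw [hXn]; ring
    rw [h]; exact Dvd.dvd.mul_left hMk (X ^ r)
  have d2 : (X ^ 2 + X + 1) ∣ X ^ (2 * n) - X ^ (2 * r) := by
    have h : X ^ (2 * n) - X ^ (2 * r) = X ^ (2 * r) * (((X ^ 3) ^ k) ^ 2 - 1) := by
      rw [hX2n]; ring
    rw [h]; exact Dvd.dvd.mul_left hMk2 (X ^ (2 * r))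
  have d3 : (X ^ 2 + X + 1) ∣ X ^ (2 * r) + X ^ r + 1 := by
    rcases hr with h | h <;> rw [h]
    · exact ⟨1, by ring⟩
    · exact ⟨X ^ 2 - X + 1, by ring⟩
  have hM : (X ^ 2 + X + 1) ∣ X ^ (2 * n) + X ^ n + 1 := by
    have h : X ^ (2 * n) + X ^ n + 1 =
        (X ^ (2 * n) - X ^ (2 * r)) + ((X ^ n - X ^ r) + (X ^ (2 * r) + X ^ r + 1)) := by ring
    rw [h]; exact dvd_add d2 (dvd_add d1 d3)
  obtain ⟨C, hC⟩ := hM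
  refine ⟨C, ?_⟩
  have hfac : X ^ (3 * n) = (X ^ n) ^ 3 := by rw [← pow_mul]; congr 1; omega
  calc (X ^ (3 * n) - 1) * (X - 1) = (X ^ n - 1) * (X ^ (2 * n) + X ^ n + 1) * (X - 1) := by
        rw [hfac]
        have h2 : X ^ (2 * n) = (X ^ n) ^ 2 := by rw [← pow_mul]; congr 1; omega
        rw [h2]; ring
  _ = (X ^ n - 1) * (X ^ 3 - 1) * C := by rw [hC]; ring

/-- Theorem 3.3 of the paper, monomial case: for 3 ∤ n,
gcd(i,2n) = 1, gcd(i,3n) = 3 and a ∈ GF(q^{3n})* with N_{q^{3n}/q^3}(a) ∉ F_q,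
the set L_U = { GF(q^{2n})·(a x^{q^i} + xω) } is a scattered F_q-linear set of
rank 3n of PG(2, q^{2n}) = PG(GF(q^{6n}), GF(q^{2n})). -/
theorem stmt5 (q n i : ℕ) (hq : IsPrimePow q) (hn : 2 ≤ n) (hn3 : ¬ (3 ∣ n))
    (hi1 : Nat.gcd i (2 * n) = 1) (hi2 : Nat.gcd i (3 * n) = 3)
    (K : Type*) [Field K] [Fintype K] (hK : Nat.card K = q ^ (6 * n))
    (a : K) (ha : a ^ q ^ (3 * n) = a) (ha0 : a ≠ 0)
    (hnorm : ¬ ((a ^ ((q ^ (3 * n) - 1) / (q ^ 3 - 1))) ^ q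
        = a ^ ((q ^ (3 * n) - 1) / (q ^ 3 - 1))))
    (ω : K) (hω1 : ω ^ q ^ (2 * n) = ω) (hω2 : ω ^ q ^ n ≠ ω)
    (U : Set K)
    (hU : U = {z : K | ∃ x : K, x ^ q ^ (3 * n) = x ∧ z = a * x ^ q ^ i + x * ω}) :
    Nat.card U = q ^ (3 * n) ∧
    (∀ u ∈ U, u ≠ 0 → ∀ v ∈ U, v ≠ 0 → ∀ l : K,
        l ^ q ^ (2 * n) = l → v = l * u → l ^ q = l) := by

  classical
  have hq2 : 2 ≤ q := hq.two_le
  obtain ⟨p, m, hpp, hm, hpm⟩ := hq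
  have hp : Nat.Prime p := Nat.prime_iff.mpr hpp
  have hcard : Fintype.card K = q ^ (6 * n) := by rw [← Nat.card_eq_fintype_card, hK]
  -- characteristic
  have hchar : CharP K p := by
    have hc : CharP K (ringChar K) := ringChar.charP K
    have hrp : (ringChar K).Prime := CharP.char_is_prime K (ringChar K)
    obtain ⟨f, -, hf⟩ := FiniteField.card K (ringChar K)
    have hpq : p ∣ ringChar K := by
      have h1 : p ∣ q ^ (6 * n) := by
        rw [← hpm]; exact dvd_pow (dvd_pow_self p hm.ne') (by omega)
      rw [← hcard, hf] at h1
      exact hp.dvd_of_dvd_pow h1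
    rwa [← ((Nat.prime_dvd_prime_iff_eq hp hrp).mp hpq)] at hc
  haveI := hchar
  haveI : Fact p.Prime := ⟨hp⟩
  have hFadd : ∀ (j : ℕ) (x y : K), (x + y) ^ q ^ j = x ^ q ^ j + y ^ q ^ j := by
    intro j x y
    rw [← hpm]
    simp only [← pow_mul]
    exact add_pow_char_pow x y p (m * j)
  have hFsub : ∀ (j : ℕ) (x y : K), (x - y) ^ q ^ j = x ^ q ^ j - y ^ q ^ j := by
    intro j x y
    rw [← hpm]
    simp only [← pow_mul]
    exact sub_pow_char_pow x y (m * j)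
  have hqj0 : ∀ j : ℕ, q ^ j ≠ 0 := fun j => by positivity
  have hinj : ∀ (j : ℕ) (x y : K), x ^ q ^ j = y ^ q ^ j → x = y := by
    intro j x y h
    have h2 : (x - y) ^ q ^ j = 0 := by rw [hFsub, h, sub_self]
    exact sub_eq_zero.mp (pow_eq_zero_iff (hqj0 j) |>.mp h2)
  have hcomb : ∀ (A B : ℕ) (x : K), (x ^ q ^ A) ^ q ^ B = x ^ q ^ (A + B) := by
    intro A B x; rw [← pow_mul, ← pow_add]
  have hswap : ∀ (A B : ℕ) (x : K), (x ^ q ^ A) ^ q ^ B = (x ^ q ^ B) ^ q ^ A := by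
    intro A B x; rw [hcomb, hcomb, Nat.add_comm]
  constructor
  · -- cardinality
    set D := q ^ (3 * n) - 1 with hDdef
    have hq3n : 2 ≤ q ^ (3 * n) := le_trans hq2 (Nat.le_self_pow (by omega) q)
    have hD0 : 0 < D := by omega
    have hDN : D ∣ q ^ (6 * n) - 1 := by
      have h6 : q ^ (6 * n) = (q ^ (3 * n)) ^ 2 := by rw [← pow_mul]; congr 1; omega
      rw [h6]; simpa using Nat.sub_dvd_pow_sub_pow (q ^ (3 * n)) 1 2
    set N := q ^ (6 * n) - 1 with hNdef
    have hN0 : 0 < N := by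
      have : 2 ≤ q ^ (6 * n) := le_trans hq2 (Nat.le_self_pow (by omega) q)
      omega
    have hcardU : Nat.card Kˣ = N := by rw [Nat.card_units, hK]
    obtain ⟨g, hg⟩ := IsCyclic.exists_generator (α := Kˣ)
    have hord : orderOf g = N := by
      rw [orderOf_eq_card_of_forall_mem_zpowers hg, hcardU]
    have hgD : orderOf (g ^ (N / D)) = D := by
      rw [orderOf_pow, hord, Nat.gcd_eq_right (Nat.div_dvd_of_dvd hDN),
        Nat.div_div_self hDN hN0.ne']
    have hprim : IsPrimitiveRoot ((g ^ (N / D) : Kˣ) : K) D := by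
      have h := IsPrimitiveRoot.orderOf (g ^ (N / D))
      rw [hgD] at h
      exact IsPrimitiveRoot.coe_units_iff.mpr h
    have hroots : (Polynomial.nthRootsFinset D (1 : K)).card = D := hprim.card_nthRootsFinset
    have h0notin : (0 : K) ∉ Polynomial.nthRootsFinset D (1 : K) := by
      intro h
      have := (Polynomial.mem_nthRootsFinset hD0 (1 : K)).mp h
      rw [zero_pow hD0.ne'] at this
      exact zero_ne_one this
    have hSet : {x : K | x ^ q ^ (3 * n) = x}
        = ↑(insert (0 : K) (Polynomial.nthRootsFinset D (1 : K))) := by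
      ext x
      simp only [Set.mem_setOf_eq, Finset.coe_insert, Set.mem_insert_iff, Finset.mem_coe,
        Polynomial.mem_nthRootsFinset hD0 (1 : K)]
      constructor
      · intro hx
        rcases eq_or_ne x 0 with h | h
        · exact Or.inl h
        · refine Or.inr ?_
          have hxp : x ^ D * x = 1 * x := by
            rw [← pow_succ, one_mul, show D + 1 = q ^ (3 * n) from by omega]; exact hx
          exact mul_right_cancel₀ h hxp
      · rintro (rfl | hx)
        · exact zero_pow (hqj0 _)
        · rw [show q ^ (3 * n) = D + 1 from by omega, pow_succ, hx, one_mul]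
    have hinjOn : Set.InjOn (fun x : K => a * x ^ q ^ i + x * ω)
        {x : K | x ^ q ^ (3 * n) = x} := by
      intro x hx y hy hxy
      simp only [Set.mem_setOf_eq] at hx hy
      by_contra hne
      have hd0 : x - y ≠ 0 := sub_ne_zero.mpr hne
      simp only at hxy
      have h2 : ω * (x - y) = -(a * (x - y) ^ q ^ i) := by
        rw [hFsub]; linear_combination hxy
      have hd3 : (x - y) ^ q ^ (3 * n) = x - y := by rw [hFsub, hx, hy]
      have hω3 : ω ^ q ^ (3 * n) = ω := by
        have hc := congrArg (· ^ q ^ (3 * n)) h2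
        have hneg : ∀ u : K, (-u) ^ q ^ (3 * n) = -(u ^ q ^ (3 * n)) := by
          intro u
          rw [show -u = 0 - u from by ring, hFsub, zero_pow (hqj0 _), zero_sub]
        rw [mul_pow, hd3, hneg, mul_pow, ha, hswap i (3 * n), hd3] at hc
        exact mul_right_cancel₀ hd0 (hc.trans h2.symm)
      have hfix := powfix_gcd q (3 * n) (2 * n) ω hω3 hω1
      rw [Nat.gcd_mul_right, show Nat.gcd 3 2 = 1 from by decide, one_mul] at hfix
      exact hω2 hfix
    have hUimg : U = (fun x : K => a * x ^ q ^ i + x * ω) '' {x : K | x ^ q ^ (3 * n) = x} := by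
      rw [hU]; ext z
      simp only [Set.mem_setOf_eq, Set.mem_image]
      exact ⟨fun ⟨x, h1, h2⟩ => ⟨x, h1, h2.symm⟩, fun ⟨x, h1, h2⟩ => ⟨x, h1, h2.symm⟩⟩
    rw [hUimg, Nat.card_coe_set_eq, Set.ncard_image_of_injOn hinjOn, hSet,
      Set.ncard_coe_finset, Finset.card_insert_of_notMem h0notin, hroots]
    omega
  · -- scatteredness
    intro u hu hu0 v hv hv0 l hl hvl
    rw [hU] at hu hv
    obtain ⟨x, hx3, hux⟩ := hu
    obtain ⟨y, hy3, hvy⟩ := hv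
    have hx0 : x ≠ 0 := by
      rintro rfl
      exact hu0 (by rw [hux, zero_pow (hqj0 i), mul_zero, zero_mul, add_zero])
    have hy0 : y ≠ 0 := by
      rintro rfl
      exact hv0 (by rw [hvy, zero_pow (hqj0 i), mul_zero, zero_mul, add_zero])
    obtain ⟨ω', hω'def⟩ : ∃ w : K, w = ω ^ q ^ n := ⟨_, rfl⟩
    obtain ⟨l', hl'def⟩ : ∃ w : K, w = l ^ q ^ n := ⟨_, rfl⟩
    have hωc : ω' ^ q ^ n = ω := by
      rw [hω'def, hcomb, show n + n = 2 * n by omega, hω1]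
    have hlc : l' ^ q ^ n = l := by
      rw [hl'def, hcomb, show n + n = 2 * n by omega, hl]
    have hδ0 : ω - ω' ≠ 0 := sub_ne_zero.mpr (fun h => hω2 (by rw [← hω'def, ← h]))
    have E : a * y ^ q ^ i + y * ω = l * (a * x ^ q ^ i + x * ω) := by
      rw [← hux, ← hvy]; exact hvl
    have c3 : ∀ w : K, w ^ q ^ (3 * n) = w → (w ^ q ^ i) ^ q ^ (3 * n) = w ^ q ^ i := by
      intro w hw; rw [hswap, hw]
    have cω3 : ω ^ q ^ (3 * n) = ω' := by
      rw [show 3 * n = 2 * n + n by omega, ← hcomb, hω1, hω'def]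
    have cl3 : l ^ q ^ (3 * n) = l' := by
      rw [show 3 * n = 2 * n + n by omega, ← hcomb, hl, hl'def]
    have E' : a * y ^ q ^ i + y * ω' = l' * (a * x ^ q ^ i + x * ω') := by
      have hc := congrArg (· ^ q ^ (3 * n)) E
      simp only [hFadd, mul_pow] at hc
      rw [ha, hx3, hy3, cω3, cl3, c3 x hx3, c3 y hy3] at hc
      exact hc
    by_cases hll : l' = l
    · -- Case 1 : l ∈ F_{q^n}
      rw [hll] at E'
      have h1 : y * (ω - ω') = l * x * (ω - ω') := by linear_combination E - E'
      have hyx : y = l * x := mul_right_cancel₀ hδ0 h1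
      rw [hyx, mul_pow] at E
      have h2 : l ^ q ^ i * (a * x ^ q ^ i) = l * (a * x ^ q ^ i) := by linear_combination E
      have hli : l ^ q ^ i = l :=
        mul_right_cancel₀ (mul_ne_zero ha0 (pow_ne_zero _ hx0)) h2
      have hln : l ^ q ^ n = l := by rw [← hl'def, hll]
      have hg := powfix_gcd q i n l hli hln
      have hgcd1 : Nat.gcd i n = 1 := by
        have hdvd : Nat.gcd i n ∣ Nat.gcd i (2 * n) :=
          Nat.dvd_gcd (Nat.gcd_dvd_left i n) ((Nat.gcd_dvd_right i n).trans (dvd_mul_left n 2))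
        rw [hi1] at hdvd
        exact Nat.dvd_one.mp hdvd
      rw [hgcd1, pow_one] at hg
      exact hg
    · -- Case 2 : impossible
      exfalso
      -- notation: δ = ω - ω', s, t, A ∈ F_{q^n}
      obtain ⟨s, hsdef⟩ : ∃ w : K, w = (l - l') / (ω - ω') := ⟨_, rfl⟩
      obtain ⟨t, htdef⟩ : ∃ w : K, w = (l * ω - l' * ω') / (ω - ω') := ⟨_, rfl⟩
      obtain ⟨A, hAdef⟩ : ∃ w : K, w = (l' * ω - l * ω') / (ω - ω') := ⟨_, rfl⟩
      have hsδ : s * (ω - ω') = l - l' := by rw [hsdef, div_mul_cancel₀ _ hδ0]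
      have htδ : t * (ω - ω') = l * ω - l' * ω' := by rw [htdef, div_mul_cancel₀ _ hδ0]
      have hAδ : A * (ω - ω') = l' * ω - l * ω' := by rw [hAdef, div_mul_cancel₀ _ hδ0]
      have hs0 : s ≠ 0 := by
        rw [hsdef]
        exact div_ne_zero (sub_ne_zero.mpr (fun h => hll h.symm)) hδ0
      -- conjugation facts at exponent n
      have cδn : (ω - ω') ^ q ^ n = -(ω - ω') := by
        rw [hFsub, ← hω'def, hωc, neg_sub]
      have csn : s ^ q ^ n = s := by
        have h1 : s ^ q ^ n = (l' - l) / -(ω - ω') := by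
          rw [hsdef, div_pow, hFsub, cδn, ← hl'def, hlc]
        rw [h1, ← neg_sub l l', neg_div_neg_eq, ← hsdef]
      have ctn : t ^ q ^ n = t := by
        have h1 : t ^ q ^ n = (l' * ω' - l * ω) / -(ω - ω') := by
          rw [htdef, div_pow, hFsub, cδn, mul_pow, mul_pow, ← hl'def, hlc, ← hω'def, hωc]
        rw [h1, ← neg_sub (l * ω) (l' * ω'), neg_div_neg_eq, ← htdef]
      have cAn : A ^ q ^ n = A := by
        have h1 : A ^ q ^ n = (l * ω' - l' * ω) / -(ω - ω') := by
          rw [hAdef, div_pow, hFsub, cδn, mul_pow, mul_pow, ← hl'def, hlc, ← hω'def, hωc]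
        rw [h1, ← neg_sub (l' * ω) (l * ω'), neg_div_neg_eq, ← hAdef]
      -- y in terms of x
      have hy_eq : y * (ω - ω') = (s * a * x ^ q ^ i + t * x) * (ω - ω') := by
        linear_combination E - E' - (a * x ^ q ^ i) * hsδ - x * htδ
      have hy : y = s * a * x ^ q ^ i + t * x := mul_right_cancel₀ hδ0 hy_eq
      have hC_eq : (a * y ^ q ^ i) * (ω - ω') =
          (a * A * x ^ q ^ i - (ω * ω') * s * x) * (ω - ω') := by
        linear_combination ω * E' - ω' * E - (a * x ^ q ^ i) * hAδ + (ω * ω' * x) * hsδ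
      have hC : a * y ^ q ^ i = a * A * x ^ q ^ i - (ω * ω') * s * x :=
        mul_right_cancel₀ hδ0 hC_eq
      have hyσ : y ^ q ^ i =
          s ^ q ^ i * a ^ q ^ i * (x ^ q ^ i) ^ q ^ i + t ^ q ^ i * x ^ q ^ i := by
        have hc := congrArg (· ^ q ^ i) hy
        simpa only [hFadd, mul_pow] using hc
      have hkey : a * (s ^ q ^ i * a ^ q ^ i * (x ^ q ^ i) ^ q ^ i + t ^ q ^ i * x ^ q ^ i)
          = a * A * x ^ q ^ i - (ω * ω') * s * x := by rw [← hyσ]; exact hC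
      -- the element z and its σ-quadratic relation
      have hX0 : x ^ q ^ i ≠ 0 := pow_ne_zero _ hx0
      obtain ⟨z, hzdef⟩ : ∃ w : K, w = a * s * x ^ q ^ i / x := ⟨_, rfl⟩
      have hz : z * x = a * s * x ^ q ^ i := by rw [hzdef, div_mul_cancel₀ _ hx0]
      have hz0 : z ≠ 0 := by
        rw [hzdef]
        exact div_ne_zero (mul_ne_zero (mul_ne_zero ha0 hs0) hX0) hx0
      have hzσ : z ^ q ^ i * x ^ q ^ i = a ^ q ^ i * s ^ q ^ i * (x ^ q ^ i) ^ q ^ i := by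
        have hc := congrArg (· ^ q ^ i) hz
        simpa only [mul_pow] using hc
      obtain ⟨b, hbdef⟩ : ∃ w : K, w = t ^ q ^ i - A := ⟨_, rfl⟩
      obtain ⟨c, hcdef⟩ : ∃ w : K, w = (ω * ω') * s ^ 2 := ⟨_, rfl⟩
      have hω0 : ω ≠ 0 := by
        rintro rfl
        exact hω2 (by rw [zero_pow (hqj0 n)])
      have hω'0 : ω' ≠ 0 := by rw [hω'def]; exact pow_ne_zero _ hω0
      have hc0 : c ≠ 0 := by
        rw [hcdef]
        exact mul_ne_zero (mul_ne_zero hω0 hω'0) (pow_ne_zero _ hs0)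
      have R0 : z ^ q ^ i * z + b * z + c = 0 := by
        have hgoal : (z ^ q ^ i * z + b * z + c) * (x * x ^ q ^ i) = 0 := by
          rw [hbdef, hcdef]
          linear_combination (z * x) * hzσ +
            (s ^ q ^ i * a ^ q ^ i * (x ^ q ^ i) ^ q ^ i + (t ^ q ^ i - A) * x ^ q ^ i) * hz +
            (s * x ^ q ^ i) * hkey
        exact (mul_eq_zero.mp hgoal).resolve_right (mul_ne_zero hx0 hX0)
      -- membership of z in GF(q^{3n})
      have fix3 : ∀ g : K, g ^ q ^ n = g → g ^ q ^ (3 * n) = g := by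
        intro g hgn
        have h := powfix_mul q n g hgn 3
        rwa [show n * 3 = 3 * n by ring] at h
      have cs3 : s ^ q ^ (3 * n) = s := fix3 s csn
      have hz3 : z ^ q ^ (3 * n) = z := by
        rw [hzdef, div_pow, mul_pow, mul_pow, ha, hx3, cs3, c3 x hx3]
      -- conjugates z1, z2
      obtain ⟨z1, hz1def⟩ : ∃ w : K, w = z ^ q ^ n := ⟨_, rfl⟩
      obtain ⟨z2, hz2def⟩ : ∃ w : K, w = z1 ^ q ^ n := ⟨_, rfl⟩
      have hz10 : z1 ≠ 0 := by rw [hz1def]; exact pow_ne_zero _ hz0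
      have hz20 : z2 ≠ 0 := by rw [hz2def]; exact pow_ne_zero _ hz10
      have hz13 : z1 ^ q ^ (3 * n) = z1 := by rw [hz1def, hswap, hz3]
      have hz23 : z2 ^ q ^ (3 * n) = z2 := by rw [hz2def, hswap, hz13]
      have cb : b ^ q ^ n = b := by rw [hbdef, hFsub, hswap i n, ctn, cAn]
      have cs2 : (s ^ 2) ^ q ^ n = (s ^ q ^ n) ^ 2 := by
        rw [← pow_mul, mul_comm 2 (q ^ n), pow_mul]
      have cc : c ^ q ^ n = c := by
        rw [hcdef, mul_pow, mul_pow, ← hω'def, hωc, cs2, csn, mul_comm ω' ω]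
      have R1 : z1 ^ q ^ i * z1 + b * z1 + c = 0 := by
        have hc' := congrArg (· ^ q ^ n) R0
        simp only [hFadd, mul_pow, zero_pow (hqj0 n)] at hc'
        rw [hswap i n z, cb, cc, ← hz1def] at hc'
        exact hc'
      have R2 : z2 ^ q ^ i * z2 + b * z2 + c = 0 := by
        have hc' := congrArg (· ^ q ^ n) R1
        simp only [hFadd, mul_pow, zero_pow (hqj0 n)] at hc'
        rw [hswap i n z1, cb, cc, ← hz2def] at hc'
        exact hc'
      -- norm machinery
      obtain ⟨e, hedef⟩ : ∃ w : ℕ, w = (q ^ (3 * n) - 1) / (q ^ 3 - 1) := ⟨_, rfl⟩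
      have hq31 : 1 ≤ q ^ 3 := Nat.one_le_pow _ _ (by omega)
      have hq3n1 : 1 ≤ q ^ (3 * n) := Nat.one_le_pow _ _ (by omega)
      have hqn1 : 1 ≤ q ^ n := Nat.one_le_pow _ _ (by omega)
      have hqi1 : 1 ≤ q ^ i := Nat.one_le_pow _ _ (by omega)
      have hdvd3 : q ^ 3 - 1 ∣ q ^ (3 * n) - 1 := by
        have h : q ^ (3 * n) = (q ^ 3) ^ n := by rw [← pow_mul]
        rw [h]; simpa using Nat.sub_dvd_pow_sub_pow (q ^ 3) 1 n
      have he : e * (q ^ 3 - 1) = q ^ (3 * n) - 1 := by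
        rw [hedef]; exact Nat.div_mul_cancel hdvd3
      have h3i : 3 ∣ i := hi2 ▸ Nat.gcd_dvd_left i (3 * n)
      have hdvd_i : q ^ (3 * n) - 1 ∣ e * (q ^ i - 1) := by
        obtain ⟨j, hj⟩ := h3i
        have h3 : q ^ 3 - 1 ∣ q ^ i - 1 := by
          rw [hj, pow_mul]; simpa using Nat.sub_dvd_pow_sub_pow (q ^ 3) 1 j
        obtain ⟨k, hk⟩ := h3
        exact ⟨k, by rw [hk, ← mul_assoc, he]⟩
      have hdvd_n : q ^ n - 1 ∣ e * (q - 1) := by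
        have hkd := key_dvd q n hq2 hn3
        have h1 : e * (q - 1) * (q ^ 3 - 1) = (q ^ (3 * n) - 1) * (q - 1) := by
          rw [mul_right_comm, he]
        have h2 : (q ^ n - 1) * (q ^ 3 - 1) ∣ (e * (q - 1)) * (q ^ 3 - 1) := by
          rw [h1]; exact hkd
        have hq3pos : 0 < q ^ 3 - 1 := by
          have h23 : 2 ≤ q ^ 3 := le_trans hq2 (Nat.le_self_pow (by omega) q)
          omega
        exact Nat.dvd_of_mul_dvd_mul_right hq3pos h2
      have hone : ∀ (j : ℕ) (g : K), g ≠ 0 → g ^ q ^ j = g → g ^ (q ^ j - 1) = 1 := by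
        intro j g hg0 hg
        have h1 : g ^ (q ^ j - 1) * g = 1 * g := by
          rw [← pow_succ, one_mul, Nat.sub_add_cancel (Nat.one_le_pow _ _ (by omega))]
          exact hg
        exact mul_right_cancel₀ hg0 h1
      have hNσ : ∀ g : K, g ≠ 0 → g ^ q ^ (3 * n) = g → (g ^ q ^ i) ^ e = g ^ e := by
        intro g hg0 hg
        obtain ⟨k, hk⟩ := hdvd_i
        have harith : q ^ i * e = e + (q ^ (3 * n) - 1) * k := by
          calc q ^ i * e = e * ((q ^ i - 1) + 1) := by
                rw [Nat.sub_add_cancel hqi1, mul_comm]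
          _ = e + (q ^ (3 * n) - 1) * k := by rw [mul_add, mul_one, hk, add_comm]
        rw [← pow_mul, harith, pow_add, pow_mul, hone (3 * n) g hg0 hg, one_pow, mul_one]
      have hNq3 : ∀ g : K, g ≠ 0 → g ^ q ^ (3 * n) = g → (g ^ e) ^ q ^ 3 = g ^ e := by
        intro g hg0 hg
        have harith : e * q ^ 3 = e + (q ^ (3 * n) - 1) := by
          calc e * q ^ 3 = e * ((q ^ 3 - 1) + 1) := by rw [Nat.sub_add_cancel hq31]
          _ = e + (q ^ (3 * n) - 1) := by rw [mul_add, mul_one, he, add_comm]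
        rw [← pow_mul, harith, pow_add, hone (3 * n) g hg0 hg, mul_one]
      have hNfq : ∀ g : K, g ≠ 0 → g ^ q ^ n = g → (g ^ e) ^ q = g ^ e := by
        intro g hg0 hg
        obtain ⟨k, hk⟩ := hdvd_n
        have harith : e * q = e + (q ^ n - 1) * k := by
          calc e * q = e * ((q - 1) + 1) := by rw [Nat.sub_add_cancel (by omega)]
          _ = e + (q ^ n - 1) * k := by rw [mul_add, mul_one, hk, add_comm]
        rw [← pow_mul, harith, pow_add, pow_mul, hone n g hg0 hg, one_pow, mul_one]
      -- z^e = a^e * s^e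
      have hzNa : z ^ e = a ^ e * s ^ e := by
        have hxe : (x ^ q ^ i) ^ e = x ^ e := hNσ x hx0 hx3
        have hxe0 : x ^ e ≠ 0 := pow_ne_zero _ hx0
        calc z ^ e = a ^ e * s ^ e * (x ^ q ^ i) ^ e / x ^ e := by
              rw [hzdef, div_pow, mul_pow, mul_pow]
        _ = a ^ e * s ^ e := by rw [hxe, mul_div_assoc, div_self hxe0, mul_one]
      have hse : (s ^ e) ^ q = s ^ e := hNfq s hs0 csn
      have hse0 : s ^ e ≠ 0 := pow_ne_zero _ hs0
      -- it suffices that z^e is fixed by Frobenius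
      suffices hzq : (z ^ e) ^ q = z ^ e by
        apply hnorm
        rw [hedef] at hzNa hse hzq hse0
        have h2 : (a ^ ((q ^ (3 * n) - 1) / (q ^ 3 - 1))) ^ q
            * s ^ ((q ^ (3 * n) - 1) / (q ^ 3 - 1))
            = a ^ ((q ^ (3 * n) - 1) / (q ^ 3 - 1))
            * s ^ ((q ^ (3 * n) - 1) / (q ^ 3 - 1)) := by
          calc _ = (a ^ ((q ^ (3 * n) - 1) / (q ^ 3 - 1))) ^ q
                * (s ^ ((q ^ (3 * n) - 1) / (q ^ 3 - 1))) ^ q := by rw [hse]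
          _ = ((a ^ ((q ^ (3 * n) - 1) / (q ^ 3 - 1)))
                * s ^ ((q ^ (3 * n) - 1) / (q ^ 3 - 1))) ^ q := (mul_pow _ _ _).symm
          _ = (z ^ ((q ^ (3 * n) - 1) / (q ^ 3 - 1))) ^ q := by rw [← hzNa]
          _ = _ := by rw [hzq, hzNa]
        exact mul_right_cancel₀ hse0 h2
      by_cases hzz : z ^ q ^ n = z
      · exact hNfq z hz0 hzz
      · -- z, z1, z2 pairwise distinct
        have hd1 : z - z1 ≠ 0 := sub_ne_zero.mpr (fun h => hzz (by rw [← hz1def, ← h]))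
        have hd2 : z1 - z2 ≠ 0 := by
          refine sub_ne_zero.mpr (fun h => hzz ?_)
          have h2 : z ^ q ^ n = z1 ^ q ^ n := by rw [← hz1def, ← hz2def, ← h]
          have h3 : z = z1 := hinj n z z1 h2
          rw [← hz1def, ← h3]
        have pair : ∀ g h : K, g ≠ 0 → h ≠ 0 → g - h ≠ 0 → (g - h) ^ q ^ (3 * n) = g - h →
            g ^ q ^ i * g + b * g + c = 0 → h ^ q ^ i * h + b * h + c = 0 →
            g ^ e * h ^ e = c ^ e := by
          intro g h hg0 hh0 hgh hmem Rg Rh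
          have hsub : (g - h) ^ q ^ i * (g * h) = c * (g - h) := by
            rw [hFsub]; linear_combination h * Rg - g * Rh
          have hpow := congrArg (· ^ e) hsub
          simp only [mul_pow] at hpow
          rw [hNσ (g - h) hgh hmem] at hpow
          have hde : (g - h) ^ e ≠ 0 := pow_ne_zero _ hgh
          have h5 : (g ^ e * h ^ e) * (g - h) ^ e = c ^ e * (g - h) ^ e := by
            linear_combination hpow
          exact mul_right_cancel₀ hde h5
        have hm1 : (z - z1) ^ q ^ (3 * n) = z - z1 := by rw [hFsub, hz3, hz13]
        have hm2 : (z1 - z2) ^ q ^ (3 * n) = z1 - z2 := by rw [hFsub, hz13, hz23]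
        have P1 := pair z z1 hz0 hz10 hd1 hm1 R0 R1
        have P2 := pair z1 z2 hz10 hz20 hd2 hm2 R1 R2
        have hz1e0 : z1 ^ e ≠ 0 := pow_ne_zero _ hz10
        have hez : z ^ e = z2 ^ e := by
          have h3 : z ^ e * z1 ^ e = z2 ^ e * z1 ^ e := by linear_combination P1 - P2
          exact mul_right_cancel₀ hz1e0 h3
        have hz2e : z2 ^ e = (z ^ e) ^ q ^ (2 * n) := by
          have h4 : z2 = z ^ q ^ (2 * n) := by
            rw [hz2def, hz1def, hcomb, show n + n = 2 * n by omega]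
          rw [h4, ← pow_mul, mul_comm, pow_mul]
        have hfix2n : (z ^ e) ^ q ^ (2 * n) = z ^ e := by rw [← hz2e, ← hez]
        have hfix3 : (z ^ e) ^ q ^ 3 = z ^ e := hNq3 z hz0 hz3
        have hgcd : Nat.gcd (2 * n) 3 = 1 := by
          have h32 : ¬ (3 ∣ 2 * n) := by
            intro h
            exact hn3 ((Nat.Coprime.dvd_of_dvd_mul_left (by decide) h))
          have hcop : Nat.Coprime 3 (2 * n) :=
            (Nat.Prime.coprime_iff_not_dvd (by norm_num)).mpr h32
          exact Nat.coprime_comm.mp hcop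
        have hfin := powfix_gcd q (2 * n) 3 (z ^ e) hfix2n hfix3
        rwa [hgcd, pow_one] at hfin
end

section
/- Let q ≡ 1 (mod 3) be a prime power, n ≥ 2, and i with gcd(i, 2n) = gcd(i, 3n) = 1. Let a ∈ GF(q^{3n})* with (N_{q^{3n}/q}(a))^{(q-1)/3} ≠ 1, and let ω ∈ GF(q^{2n}) \ GF(q^n). Then L_U = { GF(q^{2n})·(a x^{q^i} + xω) : x ∈ GF(q^{3n})* } is a scattered F_q-linear set of rank 3n in PG(2, q^{2n}). -/
private lemma geom_mul (q : ℕ) (hq : 1 ≤ q) (m : ℕ) :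
    (q - 1) * (∑ s ∈ Finset.range m, q ^ s) = q ^ m - 1 := by
  induction m with
  | zero => simp
  | succ m ih =>
    rw [Finset.sum_range_succ, Nat.mul_add, ih]
    have h1 : 1 ≤ q ^ m := Nat.one_le_pow _ _ (by omega)
    have h2 : (q - 1) * q ^ m = q * q ^ m - q ^ m := by
      rw [Nat.sub_mul, one_mul]
    have h3 : q ^ (m + 1) = q * q ^ m := by ring
    have h4 : q ^ m ≤ q * q ^ m := Nat.le_mul_of_pos_left _ (by omega)
    omega

private lemma gcd_pow_sub_one (q : ℕ) (hq : 1 ≤ q) :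
    ∀ a b : ℕ, Nat.gcd (q ^ a - 1) (q ^ b - 1) = q ^ Nat.gcd a b - 1 := by
  intro a
  induction a using Nat.strong_induction_on with
  | _ a ih =>
    intro b
    rcases Nat.eq_zero_or_pos a with rfl | ha
    · simp
    · obtain ⟨c, hc⟩ : (q ^ a - 1) ∣ (q ^ (a * (b / a)) - 1) := by
        rw [pow_mul]
        simpa using Nat.sub_dvd_pow_sub_pow (q ^ a) 1 (b / a)
      have h2 : 1 ≤ q ^ (b % a) := Nat.one_le_pow _ _ (by omega)
      have h3 : 1 ≤ q ^ (a * (b / a)) := Nat.one_le_pow _ _ (by omega)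
      have hb : q ^ b - 1 = (q ^ (b % a) - 1) + (q ^ (b % a) * c) * (q ^ a - 1) := by
        have h1 : q ^ b = q ^ (b % a) * q ^ (a * (b / a)) := by
          rw [← pow_add, Nat.mod_add_div b a]
        have he : q ^ (a * (b / a)) = c * (q ^ a - 1) + 1 := by
          rw [mul_comm c (q ^ a - 1), ← hc]; omega
        have h5 : q ^ b = (q ^ (b % a) * c) * (q ^ a - 1) + q ^ (b % a) := by
          rw [h1, he]; ring
        omega
      rw [hb, Nat.gcd_add_mul_right_right, Nat.gcd_comm, Nat.gcd_rec a b,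
        ih (b % a) (Nat.mod_lt _ ha) a]

private lemma pow_q_stab {K : Type*} [Monoid K] (q : ℕ) (t : K) (h : t ^ q = t) :
    ∀ m, t ^ q ^ m = t := by
  intro m
  induction m with
  | zero => simp
  | succ m ih => rw [pow_succ, pow_mul, ih, h]

private lemma pow_cancel_one {K : Type*} [Field K] {t : K} (ht : t ≠ 0) {e : ℕ}
    (he : 1 ≤ e) (h : t ^ e = t) : t ^ (e - 1) = 1 := by
  have h2 : t ^ ((e - 1) + 1) = t := by rwa [show (e-1)+1 = e by omega]
  rw [pow_succ] at h2
  have := mul_right_cancel₀ ht (h2.trans (one_mul t).symm)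
  exact this

private lemma fix_of_fix_fix {K : Type*} [Field K] (q : ℕ) (hq : 1 ≤ q) {A B : ℕ} {t : K}
    (hA : t ^ q ^ A = t) (hB : t ^ q ^ B = t) : t ^ q ^ Nat.gcd A B = t := by
  rcases eq_or_ne t 0 with rfl | ht
  · have h0 : 1 ≤ q ^ Nat.gcd A B := Nat.one_le_pow _ _ (by omega)
    exact zero_pow (by omega)
  · have h1 : t ^ (q ^ A - 1) = 1 := pow_cancel_one ht (Nat.one_le_pow _ _ (by omega)) hA
    have h2 : t ^ (q ^ B - 1) = 1 := pow_cancel_one ht (Nat.one_le_pow _ _ (by omega)) hB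
    have hd : orderOf t ∣ q ^ Nat.gcd A B - 1 := by
      rw [← gcd_pow_sub_one q hq A B]
      exact Nat.dvd_gcd (orderOf_dvd_of_pow_eq_one h1) (orderOf_dvd_of_pow_eq_one h2)
    have h3 : t ^ (q ^ Nat.gcd A B - 1) = 1 := orderOf_dvd_iff_pow_eq_one.mp hd
    have h4 : 1 ≤ q ^ Nat.gcd A B := Nat.one_le_pow _ _ (by omega)
    calc t ^ q ^ Nat.gcd A B = t ^ ((q ^ Nat.gcd A B - 1) + 1) := by rw [show (q ^ Nat.gcd A B - 1) + 1 = q ^ Nat.gcd A B by omega]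
    _ = t := by rw [pow_succ, h3, one_mul]

private lemma core {K : Type*} [Field K] (q n i : ℕ) (hq2 : 2 ≤ q) (h3 : 3 ∣ q - 1)
    (hn : 2 ≤ n) (hi3n : Nat.gcd i (3 * n) = 1)
    (hfrob : ∀ (m : ℕ) (x y : K), (x + y) ^ q ^ m = x ^ q ^ m + y ^ q ^ m)
    (Z c0 c1 : K) (hZ0 : Z ≠ 0) (hZ3 : Z ^ q ^ (3 * n) = Z)
    (hc1 : c1 ^ q ^ n = c1) (hc0 : c0 ^ q ^ n = c0) (hc00 : c0 ≠ 0)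
    (hrel : Z ^ q ^ i * Z = c1 * Z + c0) :
    Z ^ ((q ^ (3 * n) - 1) / 3) = 1 := by
  have hqpos : ∀ m : ℕ, 1 ≤ q ^ m := fun m => Nat.one_le_pow _ _ (by omega)
  have hpowmod : ∀ m : ℕ, q ^ m % 3 = 1 := by
    intro m
    rw [Nat.pow_mod, show q % 3 = 1 by omega, one_pow]
    rfl
  by_cases hZn : Z ^ q ^ n = Z
  · -- Z lies in F_{q^n}: direct computation
    have hZn1 : Z ^ (q ^ n - 1) = 1 := pow_cancel_one hZ0 (hqpos n) hZn
    have key : ∀ A : ℕ, 1 ≤ A → A ^ 3 - 1 = (A - 1) * (A ^ 2 + A + 1) := by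
      intro A hA
      obtain ⟨B, rfl⟩ : ∃ B, A = B + 1 := ⟨A - 1, by omega⟩
      have h1 : (B + 1) ^ 3 = B * ((B + 1) ^ 2 + (B + 1) + 1) + 1 := by ring
      simp only [Nat.add_sub_cancel]
      omega
    have hfac : q ^ (3 * n) - 1 = (q ^ n - 1) * (q ^ (2 * n) + q ^ n + 1) := by
      rw [show q ^ (3 * n) = (q ^ n) ^ 3 by rw [← pow_mul, mul_comm],
        show q ^ (2 * n) = (q ^ n) ^ 2 by rw [← pow_mul, mul_comm]]
      exact key (q ^ n) (hqpos n)
    have h3K : 3 ∣ (q ^ (2 * n) + q ^ n + 1) := by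
      have := hpowmod (2 * n); have := hpowmod n; omega
    have hdiv : (q ^ (3 * n) - 1) / 3 = (q ^ n - 1) * ((q ^ (2 * n) + q ^ n + 1) / 3) := by
      rw [hfac, Nat.mul_div_assoc _ h3K]
    rw [hdiv, pow_mul, hZn1, one_pow]
  · -- main case: the "matrix product" argument
    have hZT : Z ^ (q ^ (3 * n) - 1) = 1 := pow_cancel_one hZ0 (hqpos _) hZ3
    have hgin : Nat.gcd i n = 1 := by
      have hd : Nat.gcd i n ∣ Nat.gcd i (3 * n) :=
        Nat.dvd_gcd (Nat.gcd_dvd_left i n) ((Nat.gcd_dvd_right i n).trans ⟨3, by ring⟩)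
      rw [hi3n] at hd
      exact Nat.dvd_one.mp hd
    -- the sequence (pseq j) = M_j · (Z,1)ᵀ
    let pseq : ℕ → K × K := fun j =>
      j.rec (Z, (1 : K)) fun j prj =>
        (c1 ^ q ^ (i * j) * prj.1 + c0 ^ q ^ (i * j) * prj.2, prj.1)
    have pseq_zero : pseq 0 = (Z, 1) := rfl
    have pseq_succ : ∀ j, pseq (j + 1) =
        (c1 ^ q ^ (i * j) * (pseq j).1 + c0 ^ q ^ (i * j) * (pseq j).2, (pseq j).1) :=
      fun j => rfl
    let pi : ℕ → K := fun j => ∏ t ∈ Finset.range j, Z ^ q ^ (i * t)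
    have hpi0 : pi 0 = 1 := by simp [pi]
    have hpis : ∀ j, pi (j + 1) = pi j * Z ^ q ^ (i * j) := fun j => Finset.prod_range_succ _ _
    have claimA : ∀ j, (pseq j).1 = pi j * Z ^ q ^ (i * j) ∧ (pseq j).2 = pi j := by
      intro j
      induction j with
      | zero => rw [pseq_zero, hpi0]; constructor <;> simp
      | succ j ih =>
        obtain ⟨ih1, ih2⟩ := ih
        rw [pseq_succ]
        refine ⟨?_, by rw [ih1, hpis]⟩
        show c1 ^ q ^ (i * j) * (pseq j).1 + c0 ^ q ^ (i * j) * (pseq j).2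
            = pi (j + 1) * Z ^ q ^ (i * (j + 1))
        rw [ih1, ih2, hpis]
        have hkey : Z ^ q ^ (i * (j + 1)) * Z ^ q ^ (i * j)
            = c1 ^ q ^ (i * j) * Z ^ q ^ (i * j) + c0 ^ q ^ (i * j) := by
          have h := congrArg (fun t : K => t ^ q ^ (i * j)) hrel
          have hexp : q ^ i * q ^ (i * j) = q ^ (i * (j + 1)) := by
            rw [← pow_add]; congr 1; ring
          rw [mul_pow, hfrob, mul_pow, ← pow_mul, hexp] at h
          exact h
        linear_combination (-pi j) * hkey
    let d : ℕ → K := fun j => (pseq j).1 * ((pseq j).2) ^ q ^ n - ((pseq j).1) ^ q ^ n * (pseq j).2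
    have claimB : ∀ j, d (j + 1) = (-(c0 ^ q ^ (i * j))) * d j := by
      intro j
      show (pseq (j+1)).1 * ((pseq (j+1)).2) ^ q ^ n - ((pseq (j+1)).1) ^ q ^ n * (pseq (j+1)).2
          = (-(c0 ^ q ^ (i * j))) * ((pseq j).1 * ((pseq j).2) ^ q ^ n - ((pseq j).1) ^ q ^ n * (pseq j).2)
      rw [pseq_succ]
      have hc1' : (c1 ^ q ^ (i * j)) ^ q ^ n = c1 ^ q ^ (i * j) := by
        rw [← pow_mul, mul_comm, pow_mul, hc1]
      have hc0' : (c0 ^ q ^ (i * j)) ^ q ^ n = c0 ^ q ^ (i * j) := by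
        rw [← pow_mul, mul_comm, pow_mul, hc0]
      have h1 : (c1 ^ q ^ (i * j) * (pseq j).1 + c0 ^ q ^ (i * j) * (pseq j).2) ^ q ^ n
          = c1 ^ q ^ (i * j) * ((pseq j).1) ^ q ^ n + c0 ^ q ^ (i * j) * ((pseq j).2) ^ q ^ n := by
        rw [hfrob, mul_pow, mul_pow, hc1', hc0']
      simp only
      rw [h1]
      ring
    have dprod : ∀ j, d j = (∏ t ∈ Finset.range j, (-(c0 ^ q ^ (i * t)))) * d 0 := by
      intro j
      induction j with
      | zero => simp
      | succ j ih => rw [claimB j, ih, Finset.prod_range_succ]; ring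
    -- periodicity lemmas
    have hZper : ∀ s, Z ^ (q ^ (3 * n)) ^ s = Z := by
      intro s
      induction s with
      | zero => simp
      | succ s ih => rw [pow_succ, pow_mul, ih, hZ3]
    have hZmod : ∀ m, Z ^ q ^ m = Z ^ q ^ (m % (3 * n)) := by
      intro m
      conv_lhs => rw [show m = 3 * n * (m / (3 * n)) + m % (3 * n) from (Nat.div_add_mod m (3 * n)).symm]
      rw [pow_add, pow_mul, pow_mul, hZper]
    have hc0per : ∀ s, c0 ^ (q ^ n) ^ s = c0 := by
      intro s
      induction s with
      | zero => simp
      | succ s ih => rw [pow_succ, pow_mul, ih, hc0]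
    have hc0mod : ∀ m, c0 ^ q ^ m = c0 ^ q ^ (m % n) := by
      intro m
      conv_lhs => rw [show m = n * (m / n) + m % n from (Nat.div_add_mod m n).symm]
      rw [pow_add, pow_mul, pow_mul, hc0per]
    -- reindexing: the products over the full Galois orbit
    have hreindex : ∀ (N : ℕ) (hN : 0 < N) (hgcd : Nat.gcd i N = 1) (u : K) ,
        ∏ t ∈ Finset.range N, u ^ q ^ ((i * t) % N) = ∏ s ∈ Finset.range N, u ^ q ^ s := by
      intro N hN hgcd u
      have hinj : Set.InjOn (fun t => (i * t) % N) (Finset.range N) := by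
        intro t1 h1 t2 h2 he
        simp only [Finset.coe_range, Set.mem_Iio] at h1 h2
        have hm : t1 % N = t2 % N :=
          Nat.ModEq.cancel_left_of_coprime (by rwa [Nat.gcd_comm] at hgcd) he
        rwa [Nat.mod_eq_of_lt h1, Nat.mod_eq_of_lt h2] at hm
      have himg : Finset.image (fun t => (i * t) % N) (Finset.range N) = Finset.range N := by
        apply Finset.eq_of_subset_of_card_le
        · intro s hs
          simp only [Finset.mem_image, Finset.mem_range] at hs ⊢
          obtain ⟨t, _, rfl⟩ := hs
          exact Nat.mod_lt _ hN
        · rw [Finset.card_image_of_injOn hinj]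
      calc ∏ t ∈ Finset.range N, u ^ q ^ ((i * t) % N)
          = ∏ s ∈ Finset.image (fun t => (i * t) % N) (Finset.range N), u ^ q ^ s := by
            rw [Finset.prod_image (fun x hx y hy h => hinj hx hy h)]
        _ = ∏ s ∈ Finset.range N, u ^ q ^ s := by rw [himg]
    -- evaluate d at 3n
    set S3 := ∑ s ∈ Finset.range (3 * n), q ^ s with hS3def
    set Sn := ∑ s ∈ Finset.range n, q ^ s with hSndef
    have hZmulper : Z ^ q ^ (i * (3 * n)) = Z := by
      rw [show i * (3 * n) = 3 * n * i by ring, pow_mul, hZper]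
    have hnu : pi (3 * n) = Z ^ S3 := by
      calc pi (3 * n) = ∏ t ∈ Finset.range (3 * n), Z ^ q ^ ((i * t) % (3 * n)) :=
            Finset.prod_congr rfl fun t _ => hZmod _
        _ = ∏ s ∈ Finset.range (3 * n), Z ^ q ^ s := hreindex (3 * n) (by omega) hi3n Z
        _ = Z ^ S3 := by rw [Finset.prod_pow_eq_pow_sum]
    have hgeo3 : (q - 1) * S3 = q ^ (3 * n) - 1 := geom_mul q (by omega) _
    have hnu_pow : (Z ^ S3) ^ (q - 1) = 1 := by
      rw [← pow_mul, show S3 * (q - 1) = (q - 1) * S3 by ring, hgeo3, hZT]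
    have hnu_q : (Z ^ S3) ^ q = Z ^ S3 := by
      conv_lhs => rw [show q = (q - 1) + 1 by omega]
      rw [pow_add, hnu_pow, one_mul, pow_one]
    have hnu_qn : (Z ^ S3) ^ q ^ n = Z ^ S3 := pow_q_stab q _ hnu_q n
    obtain ⟨hA1, hA2⟩ := claimA (3 * n)
    have hd3 : d (3 * n) = (Z ^ S3) ^ 2 * (Z - Z ^ q ^ n) := by
      show (pseq (3*n)).1 * ((pseq (3*n)).2) ^ q ^ n - ((pseq (3*n)).1) ^ q ^ n * (pseq (3*n)).2
          = (Z ^ S3) ^ 2 * (Z - Z ^ q ^ n)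
      rw [hA1, hA2, hZmulper, hnu, mul_pow, hnu_qn]
      ring
    have hd0 : d 0 = Z - Z ^ q ^ n := by
      show (pseq 0).1 * ((pseq 0).2) ^ q ^ n - ((pseq 0).1) ^ q ^ n * (pseq 0).2
          = Z - Z ^ q ^ n
      rw [pseq_zero]
      simp
    have hd0ne : Z - Z ^ q ^ n ≠ 0 := sub_ne_zero.mpr fun h => hZn h.symm
    -- the product of the -c0 factors
    have hshift : ∀ t : ℕ, (i * (n + t)) % n = (i * t) % n := by
      intro t
      rw [show i * (n + t) = i * t + i * n by ring, Nat.add_mul_mod_self_right]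
    have heta : ∏ t ∈ Finset.range (3 * n), (-(c0 ^ q ^ (i * t)))
        = (-1 : K) ^ (3 * n) * (c0 ^ Sn) ^ 3 := by
      have h1 : ∀ t ∈ Finset.range (3 * n), (-(c0 ^ q ^ (i * t)))
          = (-1 : K) * c0 ^ q ^ ((i * t) % n) := by
        intro t _
        rw [← hc0mod]; ring
      rw [Finset.prod_congr rfl h1, Finset.prod_mul_distrib, Finset.prod_const,
        Finset.card_range]
      congr 1
      have hsplit : ∏ t ∈ Finset.range (3 * n), c0 ^ q ^ ((i * t) % n)
          = (∏ t ∈ Finset.range n, c0 ^ q ^ ((i * t) % n)) ^ 3 := by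
        rw [show 3 * n = n + (n + n) by ring, Finset.prod_range_add, Finset.prod_range_add]
        have e1 : ∀ t ∈ Finset.range n, c0 ^ q ^ ((i * (n + t)) % n) = c0 ^ q ^ ((i * t) % n) := by
          intro t _; rw [hshift t]
        have e2 : ∀ t ∈ Finset.range n, c0 ^ q ^ ((i * (n + (n + t))) % n) = c0 ^ q ^ ((i * t) % n) := by
          intro t _; rw [hshift (n + t), hshift t]
        rw [Finset.prod_congr rfl e1, Finset.prod_congr rfl e2]
        ring
      rw [hsplit]
      congr 1
      rw [hreindex n (by omega) hgin c0, Finset.prod_pow_eq_pow_sum]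
    have hkey2 : (Z ^ S3) ^ 2 = (-1 : K) ^ (3 * n) * (c0 ^ Sn) ^ 3 := by
      have h := dprod (3 * n)
      rw [hd3, hd0, heta] at h
      exact mul_right_cancel₀ hd0ne h
    set G3 := (q - 1) / 3 with hG3
    have h3G3 : 3 * G3 = q - 1 := Nat.mul_div_cancel' h3
    have hgeon : (q - 1) * Sn = q ^ n - 1 := geom_mul q (by omega) n
    have hc0n1 : c0 ^ (q ^ n - 1) = 1 := pow_cancel_one hc00 (hqpos n) hc0
    have hcG : ((c0 ^ Sn) ^ 3) ^ G3 = 1 := by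
      rw [← pow_mul, h3G3, ← pow_mul, mul_comm Sn (q - 1), hgeon, hc0n1]
    have hk2 : ((Z ^ S3) ^ G3) ^ 2 = ((-1 : K) ^ (3 * n)) ^ G3 := by
      have h := congrArg (fun t : K => t ^ G3) hkey2
      calc ((Z ^ S3) ^ G3) ^ 2 = ((Z ^ S3) ^ 2) ^ G3 := by
            rw [← pow_mul, ← pow_mul, mul_comm G3 2, pow_mul, pow_mul]
        _ = ((-1 : K) ^ (3 * n)) ^ G3 * ((c0 ^ Sn) ^ 3) ^ G3 := by rw [h, mul_pow]
        _ = ((-1 : K) ^ (3 * n)) ^ G3 := by rw [hcG, mul_one]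
    have hk3 : ((Z ^ S3) ^ G3) ^ 3 = 1 := by
      rw [← pow_mul, show G3 * 3 = q - 1 by omega, hnu_pow]
    have he2 : (((-1 : K) ^ (3 * n)) ^ G3) ^ 2 = 1 := by
      calc (((-1 : K) ^ (3 * n)) ^ G3) ^ 2 = ((-1 : K)) ^ (3 * n * (G3 * 2)) := by
            rw [← pow_mul, ← pow_mul]
        _ = (((-1 : K)) ^ 2) ^ (3 * n * G3) := by rw [← pow_mul]; congr 1; ring
        _ = 1 := by rw [neg_one_sq, one_pow]
    have hk4 : ((Z ^ S3) ^ G3) ^ 4 = 1 := by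
      rw [show (4 : ℕ) = 2 * 2 by rfl, pow_mul, hk2, he2]
    have hk1 : (Z ^ S3) ^ G3 = 1 := by
      have h43 : ((Z ^ S3) ^ G3) ^ 4 = ((Z ^ S3) ^ G3) ^ 3 * ((Z ^ S3) ^ G3) := by ring
      rw [hk4, hk3, one_mul] at h43
      exact h43.symm
    have hdvd1 : (q - 1) ∣ q ^ (3 * n) - 1 := by
      simpa using Nat.sub_dvd_pow_sub_pow q 1 (3 * n)
    have hS3eq : S3 = (q ^ (3 * n) - 1) / (q - 1) := by
      rw [← hgeo3, Nat.mul_div_cancel_left _ (by omega : 0 < q - 1)]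
    have hfinal : S3 * G3 = (q ^ (3 * n) - 1) / 3 := by
      rw [hS3eq, hG3, Nat.div_mul_div_comm hdvd1 h3,
        mul_comm (q ^ (3 * n) - 1) (q - 1)]
      exact Nat.mul_div_mul_left _ _ (by omega)
    rw [← hfinal, pow_mul]
    exact hk1



/-- Theorem 3.4 of the paper: for q ≡ 1 (mod 3), n ≥ 2,
gcd(i,2n) = gcd(i,3n) = 1 and a ∈ GF(q^{3n})* with (N_{q^{3n}/q}(a))^{(q-1)/3} ≠ 1,
the set L_U = { GF(q^{2n})·(a x^{q^i} + xω) } is a scattered F_q-linear set of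
rank 3n of PG(2, q^{2n}). -/
theorem stmt6 (q n i : ℕ) (hq : IsPrimePow q) (hqmod : q % 3 = 1) (hn : 2 ≤ n)
    (hi1 : Nat.gcd i (2 * n) = 1) (hi2 : Nat.gcd i (3 * n) = 1)
    (K : Type*) [Field K] [Fintype K] (hK : Nat.card K = q ^ (6 * n))
    (a : K) (ha : a ^ q ^ (3 * n) = a) (ha0 : a ≠ 0)
    (hnorm : (a ^ ((q ^ (3 * n) - 1) / (q - 1))) ^ ((q - 1) / 3) ≠ 1)
    (ω : K) (hω1 : ω ^ q ^ (2 * n) = ω) (hω2 : ω ^ q ^ n ≠ ω)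
    (U : Set K)
    (hU : U = {z : K | ∃ x : K, x ^ q ^ (3 * n) = x ∧ z = a * x ^ q ^ i + x * ω}) :
    Nat.card U = q ^ (3 * n) ∧
    (∀ u ∈ U, u ≠ 0 → ∀ v ∈ U, v ≠ 0 → ∀ l : K,
        l ^ q ^ (2 * n) = l → v = l * u → l ^ q = l) := by
  classical
  obtain ⟨p, k, hpp, hk, hpk⟩ := hq
  have hp_nat : p.Prime := Nat.prime_iff.mpr hpp
  have hq2 : 2 ≤ q := by
    rw [← hpk]
    calc 2 ≤ p := hp_nat.two_le
    _ ≤ p ^ k := Nat.le_self_pow (by omega) p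
  have h3 : 3 ∣ q - 1 := by omega
  have hqpos : ∀ m : ℕ, 1 ≤ q ^ m := fun m => Nat.one_le_pow _ _ (by omega)
  have hq6 : Fintype.card K = q ^ (6 * n) := by rw [← Nat.card_eq_fintype_card, hK]
  -- characteristic
  have hcharP : CharP K p := by
    have hchar : CharP K (ringChar K) := ringChar.charP K
    obtain ⟨n', hp', hcard'⟩ := FiniteField.card K (ringChar K)
    have hdvd : p ∣ (ringChar K) ^ (n' : ℕ) := by
      rw [← hcard', hq6, ← hpk]
      exact dvd_pow (dvd_pow_self p (by omega)) (by positivity)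
    have : p = ringChar K := by
      have := hp_nat.dvd_of_dvd_pow hdvd
      exact (Nat.prime_dvd_prime_iff_eq hp_nat hp').mp this
    rwa [this]
  haveI := hcharP
  haveI : Fact p.Prime := ⟨hp_nat⟩
  haveI : ExpChar K p := .prime hp_nat
  -- Frobenius ring homs
  have hΦex : ∀ m : ℕ, ∃ φ : K →+* K, ∀ x : K, φ x = x ^ q ^ m := by
    intro m
    refine ⟨iterateFrobenius K p (k * m), fun x => ?_⟩
    rw [iterateFrobenius_def, pow_mul, hpk]
  obtain ⟨Φ3, hΦ3⟩ := hΦex (3 * n)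
  obtain ⟨Φn, hΦn⟩ := hΦex n
  obtain ⟨Φi, hΦi⟩ := hΦex i
  have hfrob : ∀ (m : ℕ) (x y : K), (x + y) ^ q ^ m = x ^ q ^ m + y ^ q ^ m := by
    intro m x y
    obtain ⟨φ, hφ⟩ := hΦex m
    rw [← hφ, ← hφ, ← hφ, map_add]
  have hgin : Nat.gcd i n = 1 := by
    have hd : Nat.gcd i n ∣ Nat.gcd i (3 * n) :=
      Nat.dvd_gcd (Nat.gcd_dvd_left i n) ((Nat.gcd_dvd_right i n).trans ⟨3, by ring⟩)
    rw [hi2] at hd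
    exact Nat.dvd_one.mp hd
  have hg23 : Nat.gcd (2 * n) (3 * n) = n := by
    rw [Nat.gcd_mul_right]
    norm_num
  have hdvd1 : (q - 1) ∣ q ^ (3 * n) - 1 := by
    simpa using Nat.sub_dvd_pow_sub_pow q 1 (3 * n)
  have h3T : 3 ∣ q ^ (3 * n) - 1 := h3.trans hdvd1
  -- PART 1 : cardinality
  have hcard : Nat.card U = q ^ (3 * n) := by
    have hm0 : 0 < q ^ (3 * n) - 1 := by
      have := Nat.le_self_pow (show 3 * n ≠ 0 by omega) q
      omega
    have hmN : q ^ (3 * n) - 1 ∣ q ^ (6 * n) - 1 := by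
      have h := Nat.sub_dvd_pow_sub_pow (q ^ (3 * n)) 1 2
      rw [← pow_mul, one_pow, show 3 * n * 2 = 6 * n by ring] at h
      exact h
    have hN0 : 0 < q ^ (6 * n) - 1 := by
      have := Nat.le_self_pow (show 6 * n ≠ 0 by omega) q
      omega
    obtain ⟨g, hg⟩ := IsCyclic.exists_generator (α := Kˣ)
    have hordg : orderOf g = q ^ (6 * n) - 1 := by
      rw [orderOf_eq_card_of_forall_mem_zpowers hg, Nat.card_units, hK]
    have hj0 : (q ^ (6 * n) - 1) / (q ^ (3 * n) - 1) ≠ 0 := by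
      intro h
      have := Nat.div_pos (Nat.le_of_dvd hN0 hmN) hm0
      omega
    have hordζ : orderOf (g ^ ((q ^ (6 * n) - 1) / (q ^ (3 * n) - 1))) = q ^ (3 * n) - 1 := by
      rw [orderOf_pow' g hj0, hordg, Nat.gcd_eq_right (Nat.div_dvd_of_dvd hmN),
        Nat.div_div_self hmN (by omega)]
    have hprim : IsPrimitiveRoot ((g ^ ((q ^ (6 * n) - 1) / (q ^ (3 * n) - 1)) : Kˣ) : K)
        (q ^ (3 * n) - 1) := by
      have h1 := IsPrimitiveRoot.orderOf (g ^ ((q ^ (6 * n) - 1) / (q ^ (3 * n) - 1)))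
      rw [hordζ] at h1
      exact IsPrimitiveRoot.coe_units_iff.mpr h1
    have hsucc : (q ^ (3 * n) - 1) + 1 = q ^ (3 * n) := by
      have := hqpos (3 * n); omega
    have hasub : ∀ x : K, x ^ q ^ (3 * n) = x ↔ x = 0 ∨ x ^ (q ^ (3 * n) - 1) = 1 := by
      intro x
      constructor
      · intro hx
        rcases eq_or_ne x 0 with rfl | hx0
        · exact Or.inl rfl
        · exact Or.inr (pow_cancel_one hx0 (hqpos _) hx)
      · rintro (rfl | hx1)
        · exact zero_pow (by positivity)
        · calc x ^ q ^ (3 * n) = x ^ ((q ^ (3 * n) - 1) + 1) := by rw [hsucc]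
          _ = x := by rw [pow_succ, hx1, one_mul]
    have hA : (Finset.univ.filter fun x : K => x ^ q ^ (3 * n) = x)
        = insert (0 : K) (Polynomial.nthRootsFinset (q ^ (3 * n) - 1) (1 : K)) := by
      ext x
      simp only [Finset.mem_filter, Finset.mem_univ, true_and, Finset.mem_insert,
        Polynomial.mem_nthRootsFinset hm0]
      exact hasub x
    have hAcard : (Finset.univ.filter fun x : K => x ^ q ^ (3 * n) = x).card = q ^ (3 * n) := by
      rw [hA, Finset.card_insert_of_notMem, hprim.card_nthRootsFinset]
      · omega
      · intro h0
        rw [Polynomial.mem_nthRootsFinset hm0, zero_pow (by omega)] at h0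
        exact zero_ne_one h0
    have hUimg : U = (fun x : K => a * x ^ q ^ i + x * ω) '' {x : K | x ^ q ^ (3 * n) = x} := by
      rw [hU]
      ext z
      simp only [Set.mem_setOf_eq, Set.mem_image]
      constructor
      · rintro ⟨x, h1, h2⟩; exact ⟨x, h1, h2.symm⟩
      · rintro ⟨x, h1, h2⟩; exact ⟨x, h1, h2.symm⟩
    have hinj : Set.InjOn (fun x : K => a * x ^ q ^ i + x * ω)
        {x : K | x ^ q ^ (3 * n) = x} := by
      intro x1 h1 x2 h2 he
      simp only [Set.mem_setOf_eq] at h1 h2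
      by_contra hne
      have hz0 : x1 - x2 ≠ 0 := sub_ne_zero.mpr hne
      have hz3 : (x1 - x2) ^ q ^ (3 * n) = x1 - x2 := by
        have h := map_sub Φ3 x1 x2
        rw [hΦ3, hΦ3, hΦ3, h1, h2] at h
        exact h
      have hzi : (x1 - x2) ^ q ^ i = x1 ^ q ^ i - x2 ^ q ^ i := by
        have h := map_sub Φi x1 x2
        rw [hΦi, hΦi, hΦi] at h
        exact h
      have heq0 : a * (x1 - x2) ^ q ^ i + (x1 - x2) * ω = 0 := by
        rw [hzi]
        simp only at he
        linear_combination he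
      have hω3 : ω ^ q ^ (3 * n) = ω := by
        have h3eq := congrArg Φ3 heq0
        simp only [map_add, map_mul, map_pow, map_zero] at h3eq
        simp only [hΦ3] at h3eq
        rw [ha, hz3] at h3eq
        have hfac : (x1 - x2) * (ω ^ q ^ (3 * n) - ω) = 0 := by
          linear_combination h3eq - heq0
        rcases mul_eq_zero.mp hfac with h | h
        · exact absurd h hz0
        · exact sub_eq_zero.mp h
      have hωn := fix_of_fix_fix q (by omega) hω1 hω3
      rw [hg23] at hωn
      exact hω2 hωn
    rw [Nat.card_coe_set_eq, hUimg, Set.ncard_image_of_injOn hinj,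
      show {x : K | x ^ q ^ (3 * n) = x}
        = ((Finset.univ.filter fun x : K => x ^ q ^ (3 * n) = x) : Finset K) by
          ext x; simp, Set.ncard_coe_finset, hAcard]
  refine ⟨hcard, ?_⟩
  -- PART 2 : scatteredness
  intro u hu hu0 v hv hv0 l hl2 hlv
  rw [hU] at hu hv
  obtain ⟨x, hx3, hux⟩ := hu
  obtain ⟨y, hy3, hvy⟩ := hv
  have hqi0 : q ^ i ≠ 0 := by positivity
  have hx0 : x ≠ 0 := by
    rintro rfl
    apply hu0
    rw [hux, zero_pow hqi0]
    ring
  have hy0 : y ≠ 0 := by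
    rintro rfl
    apply hv0
    rw [hvy, zero_pow hqi0]
    ring
  have heq : a * y ^ q ^ i + y * ω = l * (a * x ^ q ^ i + x * ω) := by
    rw [← hux, ← hvy]; exact hlv
  have hl3n : l ^ q ^ (3 * n) = l ^ q ^ n := by
    calc l ^ q ^ (3 * n) = (l ^ q ^ (2 * n)) ^ q ^ n := by
          rw [← pow_mul, ← pow_add, show 2 * n + n = 3 * n by ring]
    _ = l ^ q ^ n := by rw [hl2]
  have hω3n : ω ^ q ^ (3 * n) = ω ^ q ^ n := by
    calc ω ^ q ^ (3 * n) = (ω ^ q ^ (2 * n)) ^ q ^ n := by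
          rw [← pow_mul, ← pow_add, show 2 * n + n = 3 * n by ring]
    _ = ω ^ q ^ n := by rw [hω1]
  have hω'n : (ω ^ q ^ n) ^ q ^ n = ω := by
    rw [← pow_mul, ← pow_add, show n + n = 2 * n by ring, hω1]
  have hl'n : (l ^ q ^ n) ^ q ^ n = l := by
    rw [← pow_mul, ← pow_add, show n + n = 2 * n by ring, hl2]
  have heqb : a * y ^ q ^ i + y * (ω ^ q ^ n) = (l ^ q ^ n) * (a * x ^ q ^ i + x * (ω ^ q ^ n)) := by
    have h := congrArg Φ3 heq
    simp only [map_add, map_mul, map_pow] at h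
    simp only [hΦ3] at h
    rw [ha, hx3, hy3, hω3n, hl3n] at h
    exact h
  by_cases hln : l ^ q ^ n = l
  · -- easy case
    rw [hln] at heqb
    have hyx : y = l * x := by
      have hsub : (y - l * x) * (ω - ω ^ q ^ n) = 0 := by linear_combination heq - heqb
      rcases mul_eq_zero.mp hsub with h | h
      · exact sub_eq_zero.mp h
      · exact absurd (sub_eq_zero.mp h).symm hω2
    have hlqi : l ^ q ^ i = l := by
      rw [hyx, mul_pow] at heq
      have h3' : (l ^ q ^ i - l) * (a * x ^ q ^ i) = 0 := by linear_combination heq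
      rcases mul_eq_zero.mp h3' with h | h
      · exact sub_eq_zero.mp h
      · exact absurd h (mul_ne_zero ha0 (pow_ne_zero _ hx0))
    have hfix := fix_of_fix_fix q (by omega) hlqi hln
    rwa [hgin, pow_one] at hfix
  · -- hard case
    exfalso
    have he0 : ω - ω ^ q ^ n ≠ 0 := sub_ne_zero.mpr (Ne.symm hω2)
    have hω0 : ω ≠ 0 := fun h => hω2 (by rw [h, zero_pow (by positivity)])
    have hω'0 : ω ^ q ^ n ≠ 0 := pow_ne_zero _ hω0
    have hll' : l - l ^ q ^ n ≠ 0 := sub_ne_zero.mpr (Ne.symm hln)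
    set w : K := ω ^ q ^ n with hwdef
    set L : K := l ^ q ^ n with hLdef
    set m1 := (l - L) / (ω - w) with hm1
    set m2 := (l * ω - L * w) / (ω - w) with hm2
    set m3 := (l * w - L * ω) / (ω - w) with hm3
    set m4 := ω * w with hm4
    have hm10 : m1 ≠ 0 := div_ne_zero hll' he0
    have hm40 : m4 ≠ 0 := mul_ne_zero hω0 hω'0
    have hΦnω : Φn ω = w := hΦn ω
    have hΦnw : Φn w = ω := by rw [hΦn]; exact hω'n
    have hΦnl : Φn l = L := hΦn l
    have hΦnL : Φn L = l := by rw [hΦn]; exact hl'n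
    have hm1E : m1 ^ q ^ n = m1 := by
      rw [← hΦn, hm1, map_div₀, map_sub, map_sub, hΦnl, hΦnL, hΦnω, hΦnw,
        ← neg_sub l L, ← neg_sub ω w, neg_div_neg_eq]
    have hm2E : m2 ^ q ^ n = m2 := by
      rw [← hΦn, hm2, map_div₀, map_sub, map_sub, map_mul, map_mul, hΦnl, hΦnL, hΦnω, hΦnw,
        show L * w - l * ω = -(l * ω - L * w) by ring, ← neg_sub ω w, neg_div_neg_eq]
    have hm3E : m3 ^ q ^ n = m3 := by
      rw [← hΦn, hm3, map_div₀, map_sub, map_sub, map_mul, map_mul, hΦnl, hΦnL, hΦnω, hΦnw,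
        show L * ω - l * w = -(l * w - L * ω) by ring, ← neg_sub ω w, neg_div_neg_eq]
    have hm4E : m4 ^ q ^ n = m4 := by
      rw [← hΦn, hm4, map_mul, hΦnω, hΦnw, mul_comm]
    have hI : y * (ω - w) = (l - L) * (a * x ^ q ^ i) + (l * ω - L * w) * x := by
      linear_combination heq - heqb
    have hII : (-(a * y ^ q ^ i)) * (ω - w)
        = (l * w - L * ω) * (a * x ^ q ^ i) + (l - L) * (ω * w) * x := by
      linear_combination w * heq - ω * heqb
    have hIm : y = m1 * (a * x ^ q ^ i) + m2 * x := by
      rw [hm1, hm2]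
      field_simp
      linear_combination hI
    have hIIm : -(a * y ^ q ^ i) = m3 * (a * x ^ q ^ i) + m1 * m4 * x := by
      rw [hm1, hm3, hm4]
      field_simp
      linear_combination hII
    have hYq : y ^ q ^ i = m1 ^ q ^ i * (a ^ q ^ i * (x ^ q ^ i) ^ q ^ i)
        + m2 ^ q ^ i * x ^ q ^ i := by
      have h := congrArg Φi hIm
      simp only [map_add, map_mul, map_pow] at h
      simp only [hΦi] at h
      exact h
    have hstar : m1 ^ q ^ i * (a * ((a * x ^ q ^ i) ^ q ^ i)) + (m2 ^ q ^ i + m3) * (a * x ^ q ^ i)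
        + m1 * m4 * x = 0 := by
      rw [mul_pow a (x ^ q ^ i)]
      linear_combination (-a) * hYq - hIIm
    set Z := (a * x ^ q ^ i) / x with hZdef
    set c1 := -((m2 ^ q ^ i + m3) / m1 ^ q ^ i) with hc1def
    set c0 := -((m1 * m4) / m1 ^ q ^ i) with hc0def
    have hm1qi0 : m1 ^ q ^ i ≠ 0 := pow_ne_zero _ hm10
    have hxqi0 : x ^ q ^ i ≠ 0 := pow_ne_zero _ hx0
    have hZ0 : Z ≠ 0 := div_ne_zero (mul_ne_zero ha0 hxqi0) hx0
    have hc00 : c0 ≠ 0 := by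
      rw [hc0def]
      exact neg_ne_zero.mpr (div_ne_zero (mul_ne_zero hm10 hm40) hm1qi0)
    have hrel : Z ^ q ^ i * Z = c1 * Z + c0 := by
      have hmx0 : m1 ^ q ^ i * (x ^ q ^ i * x) ≠ 0 :=
        mul_ne_zero hm1qi0 (mul_ne_zero hxqi0 hx0)
      apply mul_left_cancel₀ hmx0
      have e1 : Z * x = a * x ^ q ^ i := by
        rw [hZdef]; exact div_mul_cancel₀ _ hx0
      have e2 : Z ^ q ^ i * x ^ q ^ i = (a * x ^ q ^ i) ^ q ^ i := by rw [← mul_pow, e1]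
      have e3 : c1 * m1 ^ q ^ i = -(m2 ^ q ^ i + m3) := by
        rw [hc1def, neg_mul, div_mul_cancel₀ _ hm1qi0]
      have e4 : c0 * m1 ^ q ^ i = -(m1 * m4) := by
        rw [hc0def, neg_mul, div_mul_cancel₀ _ hm1qi0]
      calc m1 ^ q ^ i * (x ^ q ^ i * x) * (Z ^ q ^ i * Z)
          = m1 ^ q ^ i * ((Z ^ q ^ i * x ^ q ^ i) * (Z * x)) := by ring
        _ = m1 ^ q ^ i * ((a * x ^ q ^ i) ^ q ^ i * (a * x ^ q ^ i)) := by rw [e1, e2]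
        _ = m1 ^ q ^ i * (x ^ q ^ i * x) * (c1 * Z + c0) := by
            linear_combination (x ^ q ^ i) * hstar + (-(x ^ q ^ i * x * Z)) * e3
              + ((m2 ^ q ^ i + m3) * x ^ q ^ i) * e1 + (-(x ^ q ^ i * x)) * e4
    have hc1E : c1 ^ q ^ n = c1 := by
      conv_lhs => rw [← hΦn]
      rw [hc1def]
      simp only [map_neg, map_div₀, map_add, map_pow]
      simp only [hΦn]
      rw [hm1E, hm2E, hm3E]
    have hc0E : c0 ^ q ^ n = c0 := by
      conv_lhs => rw [← hΦn]
      rw [hc0def]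
      simp only [map_neg, map_div₀, map_mul, map_pow]
      simp only [hΦn]
      rw [hm1E, hm4E]
    have hZ3 : Z ^ q ^ (3 * n) = Z := by
      conv_lhs => rw [← hΦ3]
      rw [hZdef]
      simp only [map_div₀, map_mul, map_pow]
      simp only [hΦ3]
      rw [ha, hx3]
    have hχZ : Z ^ ((q ^ (3 * n) - 1) / 3) = 1 :=
      core q n i hq2 h3 hn hi2 hfrob Z c0 c1 hZ0 hZ3 hc1E hc0E hc00 hrel
    -- now derive a ^ ((q^{3n}-1)/3) = 1, contradicting hnorm
    obtain ⟨G3, hG3⟩ := id h3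
    obtain ⟨T3, hT3⟩ := id h3T
    have hxT : x ^ (q ^ (3 * n) - 1) = 1 := pow_cancel_one hx0 (hqpos _) hx3
    have hE3 : (q ^ (3 * n) - 1) / 3 = T3 := by omega
    have hxiE : (x ^ T3) ^ q = x ^ T3 := by
      have h1 : (x ^ T3) ^ (q - 1) = 1 := by
        rw [← pow_mul, show T3 * (q - 1) = (q ^ (3 * n) - 1) * G3 by
          rw [hT3, hG3]; ring, pow_mul, hxT, one_pow]
      conv_lhs => rw [show q = (q - 1) + 1 by omega]
      rw [pow_add, h1, one_mul, pow_one]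
    have hxiqi : (x ^ T3) ^ q ^ i = x ^ T3 := pow_q_stab q _ hxiE i
    have haE : a ^ T3 = 1 := by
      have h := hχZ
      rw [hE3, hZdef, div_pow, mul_pow] at h
      have hswap : (x ^ q ^ i) ^ T3 = (x ^ T3) ^ q ^ i := by
        rw [← pow_mul, ← pow_mul, mul_comm]
      rw [hswap, hxiqi] at h
      have hxE0 : x ^ T3 ≠ 0 := pow_ne_zero _ hx0
      rw [div_eq_one_iff_eq (hxE0)] at h
      exact mul_right_cancel₀ hxE0 (h.trans (one_mul _).symm)
    apply hnorm
    rw [← pow_mul]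
    have hid : (q ^ (3 * n) - 1) / (q - 1) * ((q - 1) / 3) = T3 := by
      rw [Nat.div_mul_div_comm hdvd1 h3, mul_comm (q ^ (3 * n) - 1) (q - 1),
        Nat.mul_div_mul_left _ _ (by omega : 0 < q - 1)]
      omega
    rw [hid]
    exact haE
end

section
/- Let q be a prime power and φ(x) = Σ_{i=0}^{3n-1} a_i x^{q^i} an F_q-linear map of GF(q^{3n}), with adjoint φ̄(x) = Σ_{i=0}^{3n-1} a_i^{q^{3n-i}} x^{q^{3n-i}} with respect to the bilinear form <x,y> = Tr_{q^{3n}/q}(xy). Then the maps x ↦ φ(x)/x and x ↦ φ̄(x)/x, defined on GF(q^{3n})*, have the same image. -/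
open Finset

namespace Stmt7Aux

variable {K : Type*} [Field K] [Fintype K] [Algebra (ZMod (ringChar K)) K]

lemma trace_frob (x : K) :
    Algebra.trace (ZMod (ringChar K)) K (x ^ ringChar K)
      = Algebra.trace (ZMod (ringChar K)) K x := by
  haveI : Fact (ringChar K).Prime := ⟨CharP.char_is_prime K _⟩
  apply (algebraMap (ZMod (ringChar K)) K).injective
  rw [trace_eq_sum_automorphisms, trace_eq_sum_automorphisms]
  simp_rw [map_pow]
  rw [← sum_pow_char, ← trace_eq_sum_automorphisms, ← map_pow, ZMod.pow_card]

lemma trace_pow_p (t : ℕ) (x : K) :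
    Algebra.trace (ZMod (ringChar K)) K (x ^ ringChar K ^ t)
      = Algebra.trace (ZMod (ringChar K)) K x := by
  induction t with
  | zero => simp
  | succ t ih => rw [pow_succ, pow_mul, trace_frob, ih]

lemma trace_pow_q (s j : ℕ) (u : K) :
    Algebra.trace (ZMod (ringChar K)) K (u ^ (ringChar K ^ s) ^ j)
      = Algebra.trace (ZMod (ringChar K)) K u := by
  rw [← pow_mul (ringChar K) s j]
  exact trace_pow_p _ _

omit [Algebra (ZMod (ringChar K)) K] in
lemma pow_q_add (s j : ℕ) (u v : K) :
    (u + v) ^ (ringChar K ^ s) ^ j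
      = u ^ (ringChar K ^ s) ^ j + v ^ (ringChar K ^ s) ^ j := by
  haveI : Fact (ringChar K).Prime := ⟨CharP.char_is_prime K _⟩
  rw [← pow_mul (ringChar K) s j]
  exact add_pow_char_pow ..

lemma transfer (F G : K → K)
    (hFadd : ∀ x y, F (x + y) = F x + F y)
    (hadj : ∀ x y, Algebra.trace (ZMod (ringChar K)) K (F x * y)
      = Algebra.trace (ZMod (ringChar K)) K (x * G y))
    {x : K} (hx : x ≠ 0) (hGx : G x = 0) : ∃ y, y ≠ 0 ∧ F y = 0 := by
  by_contra hc
  push_neg at hc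
  let F' : K →+ K := AddMonoidHom.mk' F hFadd
  have hinj : Function.Injective F' :=
    (injective_iff_map_eq_zero F').mpr fun b hb => by
      by_contra h
      exact hc b h hb
  have hsurj : Function.Surjective F := Finite.injective_iff_surjective.mp hinj
  obtain ⟨b, hb⟩ := FiniteField.trace_to_zmod_nondegenerate K hx
  obtain ⟨w, hw⟩ := hsurj b
  apply hb
  have h1 := hadj w x
  rw [hw, hGx, mul_zero, map_zero] at h1
  rw [mul_comm, h1]

lemma key1 (s N : ℕ) (hN : Fintype.card K = (ringChar K ^ s) ^ N) (a : ℕ → K)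
    (x y : K) :
    Algebra.trace (ZMod (ringChar K)) K
        ((∑ i ∈ Finset.range N, a i * x ^ (ringChar K ^ s) ^ i) * y)
      = Algebra.trace (ZMod (ringChar K)) K
        (x * ∑ i ∈ Finset.range N,
          a i ^ (ringChar K ^ s) ^ (N - i) * y ^ (ringChar K ^ s) ^ (N - i)) := by
  simp only [Finset.sum_mul, Finset.mul_sum]
  rw [map_sum (Algebra.trace (ZMod (ringChar K)) K),
    map_sum (Algebra.trace (ZMod (ringChar K)) K)]
  refine Finset.sum_congr rfl fun i hi => ?_
  have hi' : i ≤ N := le_of_lt (Finset.mem_range.mp hi)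
  have e1 : (ringChar K ^ s) ^ i * (ringChar K ^ s) ^ (N - i)
      = (ringChar K ^ s) ^ N := by
    rw [← pow_add, Nat.add_sub_cancel' hi']
  rw [← trace_pow_q s (N - i) (a i * x ^ (ringChar K ^ s) ^ i * y)]
  congr 1
  rw [mul_pow, mul_pow, ← pow_mul x, e1, ← hN, FiniteField.pow_card x]
  ring

lemma key2 (s N : ℕ) (hN : Fintype.card K = (ringChar K ^ s) ^ N) (a : ℕ → K)
    (x y : K) :
    Algebra.trace (ZMod (ringChar K)) K
        ((∑ i ∈ Finset.range N,
            a i ^ (ringChar K ^ s) ^ (N - i) * x ^ (ringChar K ^ s) ^ (N - i)) * y)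
      = Algebra.trace (ZMod (ringChar K)) K
        (x * ∑ i ∈ Finset.range N, a i * y ^ (ringChar K ^ s) ^ i) := by
  simp only [Finset.sum_mul, Finset.mul_sum]
  rw [map_sum (Algebra.trace (ZMod (ringChar K)) K),
    map_sum (Algebra.trace (ZMod (ringChar K)) K)]
  refine Finset.sum_congr rfl fun i hi => ?_
  have hi' : i ≤ N := le_of_lt (Finset.mem_range.mp hi)
  have e1 : (ringChar K ^ s) ^ (N - i) * (ringChar K ^ s) ^ i
      = (ringChar K ^ s) ^ N := by
    rw [← pow_add, Nat.sub_add_cancel hi']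
  rw [← trace_pow_q s i
    (a i ^ (ringChar K ^ s) ^ (N - i) * x ^ (ringChar K ^ s) ^ (N - i) * y)]
  congr 1
  rw [mul_pow, mul_pow, ← pow_mul x, ← pow_mul (a i), e1, ← hN,
    FiniteField.pow_card x, FiniteField.pow_card (a i)]
  ring

lemma main_dir (s N : ℕ) (hN : Fintype.card K = (ringChar K ^ s) ^ N) (a : ℕ → K)
    (z x : K) (hx : x ≠ 0)
    (hz : (∑ i ∈ Finset.range N, a i * x ^ (ringChar K ^ s) ^ i) = z * x) :
    ∃ y, y ≠ 0 ∧
      (∑ i ∈ Finset.range N,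
        a i ^ (ringChar K ^ s) ^ (N - i) * y ^ (ringChar K ^ s) ^ (N - i)) = z * y := by
  obtain ⟨y, hy, hFy⟩ := transfer
    (fun u => (∑ i ∈ Finset.range N,
        a i ^ (ringChar K ^ s) ^ (N - i) * u ^ (ringChar K ^ s) ^ (N - i)) - z * u)
    (fun u => (∑ i ∈ Finset.range N, a i * u ^ (ringChar K ^ s) ^ i) - z * u)
    (fun u v => by
      simp only [pow_q_add, mul_add, Finset.sum_add_distrib]
      ring)
    (fun u v => by
      rw [show ((∑ i ∈ Finset.range N,
            a i ^ (ringChar K ^ s) ^ (N - i) * u ^ (ringChar K ^ s) ^ (N - i)) - z * u) * v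
          = (∑ i ∈ Finset.range N,
            a i ^ (ringChar K ^ s) ^ (N - i) * u ^ (ringChar K ^ s) ^ (N - i)) * v
            - u * (z * v) by ring,
        show u * ((∑ i ∈ Finset.range N, a i * v ^ (ringChar K ^ s) ^ i) - z * v)
          = u * (∑ i ∈ Finset.range N, a i * v ^ (ringChar K ^ s) ^ i) - u * (z * v) by ring,
        map_sub, map_sub, key2 s N hN a u v])
    hx (by
      show (∑ i ∈ Finset.range N, a i * x ^ (ringChar K ^ s) ^ i) - z * x = 0
      rw [hz, sub_self])
  exact ⟨y, hy, by linear_combination hFy⟩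

lemma main_dir' (s N : ℕ) (hN : Fintype.card K = (ringChar K ^ s) ^ N) (a : ℕ → K)
    (z x : K) (hx : x ≠ 0)
    (hz : (∑ i ∈ Finset.range N,
        a i ^ (ringChar K ^ s) ^ (N - i) * x ^ (ringChar K ^ s) ^ (N - i)) = z * x) :
    ∃ y, y ≠ 0 ∧ (∑ i ∈ Finset.range N, a i * y ^ (ringChar K ^ s) ^ i) = z * y := by
  obtain ⟨y, hy, hFy⟩ := transfer
    (fun u => (∑ i ∈ Finset.range N, a i * u ^ (ringChar K ^ s) ^ i) - z * u)
    (fun u => (∑ i ∈ Finset.range N,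
        a i ^ (ringChar K ^ s) ^ (N - i) * u ^ (ringChar K ^ s) ^ (N - i)) - z * u)
    (fun u v => by
      simp only [pow_q_add, mul_add, Finset.sum_add_distrib]
      ring)
    (fun u v => by
      rw [show ((∑ i ∈ Finset.range N, a i * u ^ (ringChar K ^ s) ^ i) - z * u) * v
          = (∑ i ∈ Finset.range N, a i * u ^ (ringChar K ^ s) ^ i) * v - u * (z * v) by ring,
        show u * ((∑ i ∈ Finset.range N,
            a i ^ (ringChar K ^ s) ^ (N - i) * v ^ (ringChar K ^ s) ^ (N - i)) - z * v)
          = u * (∑ i ∈ Finset.range N,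
            a i ^ (ringChar K ^ s) ^ (N - i) * v ^ (ringChar K ^ s) ^ (N - i)) - u * (z * v)
          by ring,
        map_sub, map_sub, key1 s N hN a u v])
    hx (by
      show (∑ i ∈ Finset.range N,
        a i ^ (ringChar K ^ s) ^ (N - i) * x ^ (ringChar K ^ s) ^ (N - i)) - z * x = 0
      rw [hz, sub_self])
  exact ⟨y, hy, by linear_combination hFy⟩

end Stmt7Aux

/-- Lemma 3.6 of the paper: a q-polynomial map φ of GF(q^{3n}) and
its adjoint φ̄ with respect to the trace bilinear form have the property that
x ↦ φ(x)/x and x ↦ φ̄(x)/x have the same image on GF(q^{3n})*. -/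
theorem stmt7 (q n : ℕ) (hq : IsPrimePow q) (hn : 1 ≤ n)
    (K : Type*) [Field K] [Fintype K] (hK : Nat.card K = q ^ (3 * n))
    (a : ℕ → K) :
    {z : K | ∃ x : K, x ≠ 0 ∧
        z = (∑ i ∈ Finset.range (3 * n), a i * x ^ q ^ i) / x} =
    {z : K | ∃ x : K, x ≠ 0 ∧
        z = (∑ i ∈ Finset.range (3 * n),
              (a i) ^ q ^ (3 * n - i) * x ^ q ^ (3 * n - i)) / x} := by
  classical
  have hcard : Fintype.card K = q ^ (3 * n) := by
    rw [← Nat.card_eq_fintype_card, hK]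
  haveI hpF : Fact (ringChar K).Prime := ⟨CharP.char_is_prime K _⟩
  letI : Algebra (ZMod (ringChar K)) K := ZMod.algebra _ _
  obtain ⟨r, s, hr, hs, rfl⟩ := hq
  have hrp : r = ringChar K := by
    obtain ⟨m, hpp, hm⟩ := FiniteField.card K (ringChar K)
    have hdvd : r ∣ ringChar K ^ (m : ℕ) := by
      rw [← hm, hcard]
      exact dvd_pow (dvd_pow_self r hs.ne') (by omega)
    exact (Nat.prime_dvd_prime_iff_eq hr.nat_prime hpp).mp
      (hr.nat_prime.dvd_of_dvd_pow hdvd)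
  subst hrp
  ext z
  simp only [Set.mem_setOf_eq]
  constructor
  · rintro ⟨x, hx, rfl⟩
    obtain ⟨y, hy, hy2⟩ := Stmt7Aux.main_dir s (3 * n) hcard a
      ((∑ i ∈ Finset.range (3 * n), a i * x ^ (ringChar K ^ s) ^ i) / x) x hx
      (div_mul_cancel₀ _ hx).symm
    exact ⟨y, hy, by rw [eq_div_iff hy]; exact hy2.symm⟩
  · rintro ⟨x, hx, rfl⟩
    obtain ⟨y, hy, hy2⟩ := Stmt7Aux.main_dir' s (3 * n) hcard a
      ((∑ i ∈ Finset.range (3 * n),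
        a i ^ (ringChar K ^ s) ^ (3 * n - i) * x ^ (ringChar K ^ s) ^ (3 * n - i)) / x) x hx
      (div_mul_cancel₀ _ hx).symm
    exact ⟨y, hy, by rw [eq_div_iff hy]; exact hy2.symm⟩
end

section
/- Let n > 1 and q = 2. There exists b ∈ GF(2^{3n})* such that N_{2^{3n}/2^n}(b) ≠ 1 and b is not in the image of the function H(t) = (1 - t)/t^{2^{2n+1}-1} defined on GF(2^{3n})*. -/
open Polynomial Finset
section
variable {K : Type*} [Field K] [Fintype K]

variable {K : Type*} [Field K] [Fintype K]

lemma char_two' (m : ℕ) (hK : Fintype.card K = 2 ^ m) : CharP K 2 := by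
  have hchar : CharP K (ringChar K) := ringChar.charP K
  obtain ⟨k, hp, hcard⟩ := FiniteField.card K (ringChar K)
  have h2 : ringChar K = 2 := by
    have hdvd : ringChar K ∣ 2 ^ m := by rw [← hK, hcard]; exact dvd_pow_self _ k.2.ne'
    exact (Nat.prime_dvd_prime_iff_eq hp Nat.prime_two).mp (hp.dvd_of_dvd_pow hdvd)
  exact h2 ▸ hchar

lemma card_root_filter [DecidableEq K] (p : K[X]) (hp : p ≠ 0) :
    (univ.filter fun c : K => p.eval c = 0).card ≤ p.natDegree := by
  calc (univ.filter fun c : K => p.eval c = 0).card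
      ≤ p.roots.toFinset.card := Finset.card_le_card (fun c hc => by
        rw [Multiset.mem_toFinset, mem_roots hp]
        exact (Finset.mem_filter.mp hc).2)
    _ ≤ Multiset.card p.roots := Multiset.toFinset_card_le _
    _ ≤ p.natDegree := p.card_roots'

lemma card_pow_filter [DecidableEq K] (d : ℕ) (hd : 0 < d)
    (hdvd : ∃ s, Fintype.card K - 1 = s * d) :
    (univ.filter fun v : K => v ^ d = 1).card = d := by
  obtain ⟨g, hg⟩ := IsCyclic.exists_ofOrder_eq_natCard (α := Kˣ)
  have hcard : Nat.card Kˣ = Fintype.card K - 1 := by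
    rw [Nat.card_units, Nat.card_eq_fintype_card]
  have hprim : IsPrimitiveRoot ((g : Kˣ) : K) (Fintype.card K - 1) := by
    rw [← hcard, ← hg]
    exact IsPrimitiveRoot.coe_units_iff.mpr (IsPrimitiveRoot.orderOf g)
  obtain ⟨s, hs⟩ := hdvd
  have hpos : 0 < Fintype.card K - 1 := by
    have := Fintype.one_lt_card (α := K)
    omega
  have hMprim : IsPrimitiveRoot (((g : Kˣ) : K) ^ s) d := hprim.pow hpos hs
  have : (univ.filter fun v : K => v ^ d = 1) = nthRootsFinset d (1 : K) := by
    ext v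
    simp [Polynomial.mem_nthRootsFinset hd (1 : K)]
  rw [this, hMprim.card_nthRootsFinset]


end

set_option maxHeartbeats 2000000 in
/-- Lemma 3.8 of the paper: there is b ∈ GF(2^{3n})* of norm ≠ 1
over GF(2^n) which is not in the image of H(t) = (1-t)/t^{2^{2n+1}-1}. -/
theorem stmt10 (n : ℕ) (hn : 1 < n)
    (K : Type*) [Field K] [Fintype K] (hK : Nat.card K = 2 ^ (3 * n)) :
    ∃ b : K, b ≠ 0 ∧ b ^ (1 + 2 ^ n + 2 ^ (2 * n)) ≠ 1 ∧
      ∀ t : K, t ≠ 0 → (1 - t) / t ^ (2 ^ (2 * n + 1) - 1) ≠ b := by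
  classical
  have hq0 : Fintype.card K = 2 ^ (3 * n) := by
    rw [← Nat.card_eq_fintype_card]; exact hK
  set a : ℕ := 2 ^ n with ha_def
  have ha : 4 ≤ a := by
    calc 4 = 2 ^ 2 := rfl
    _ ≤ 2 ^ n := Nat.pow_le_pow_right (by norm_num) hn
  have hq : Fintype.card K = a ^ 3 := by
    rw [hq0, ha_def, ← pow_mul, mul_comm]
  haveI hchar : CharP K 2 := by
    exact char_two' (3 * n) hq0
  haveI : Fact (Nat.Prime 2) := ⟨Nat.prime_two⟩
  have h2 : (2 : K) = 0 := by
    exact_mod_cast CharP.cast_eq_zero K 2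
  -- Frobenius
  have frobA : ∀ x y : K, (x + y) ^ a = x ^ a + y ^ a := by
    intro x y; rw [ha_def]; exact add_pow_char_pow ..
  have frobA2 : ∀ x y : K, (x + y) ^ (a ^ 2) = x ^ (a ^ 2) + y ^ (a ^ 2) := by
    intro x y; rw [ha_def, ← pow_mul]; exact add_pow_char_pow ..
  have hcardpow : ∀ x : K, x ^ (a ^ 3) = x := by
    intro x; rw [← hq]; exact FiniteField.pow_card x

  -- exponents
  set M : ℕ := 1 + 2 ^ n + 2 ^ (2 * n) with hM_def
  set e : ℕ := 2 ^ (2 * n + 1) - 1 with he_def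
  have hM2 : M = 1 + a + a ^ 2 := by
    rw [hM_def, ha_def, mul_comm 2 n, pow_mul]
  have hpow2 : 2 ^ (2 * n + 1) = 2 * a ^ 2 := by
    rw [pow_succ, mul_comm 2 n, pow_mul, ha_def]; ring
  have he2 : e = 2 * a ^ 2 - 1 := by rw [he_def, hpow2]
  have ha1 : 1 ≤ a := by omega
  have ha2 : 1 ≤ a ^ 2 := Nat.one_le_pow _ _ (by omega)
  have ha3 : 1 ≤ a ^ 3 := Nat.one_le_pow _ _ (by omega)
  have hMpos : 0 < M := by omega
  have he1 : 1 ≤ e := by rw [he2]; omega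
  have heM : e * M = M + (a ^ 3 - 1) * (2 * (a + 1)) := by
    rw [he2, hM2]
    zify [show (1:ℕ) ≤ 2 * a ^ 2 by omega, ha3]
    ring
  have hq1 : ∀ t : K, t ≠ 0 → t ^ (a ^ 3 - 1) = 1 := by
    intro t ht
    have := FiniteField.pow_card_sub_one_eq_one t ht
    rwa [hq] at this
  -- key identity: (H t)^M = (1-t)^M / t^M
  have hHM : ∀ t : K, t ≠ 0 → ((1 - t) / t ^ e) ^ M = (1 - t) ^ M / t ^ M := by
    intro t ht
    rw [div_pow, ← pow_mul]
    congr 1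
    rw [heM, pow_add, pow_mul, hq1 t ht, one_pow, mul_one]

  -- polynomials
  have hfact : ∀ m k : ℕ, m < k →
      Monic (X ^ k + X ^ m : K[X]) ∧ (X ^ k + X ^ m : K[X]).natDegree = k := by
    intro m k h
    have hdlt : (X ^ m : K[X]).degree < (X ^ k : K[X]).degree := by
      rw [degree_X_pow, degree_X_pow]; exact_mod_cast h
    constructor
    · exact monic_X_pow_add (by rw [degree_X_pow]; exact_mod_cast h)
    · have : (X ^ k + X ^ m : K[X]).degree = k := by
        rw [add_comm, degree_add_eq_right_of_degree_lt hdlt, degree_X_pow]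
      exact natDegree_eq_of_degree_eq_some this
  set p₁ : K[X] := (X ^ 2 + X ^ 1) * (X ^ (2 * a) + X ^ a) * (X ^ (2 * a ^ 2) + X ^ (a ^ 2))
    with hp1_def
  set p₂ : K[X] := (X ^ (2 * a ^ 2) + X ^ 1) * (X ^ a + X ^ 2) * (X ^ (a ^ 2) + X ^ (2 * a))
    with hp2_def
  obtain ⟨hm11, hd11⟩ := hfact 1 2 (by omega)
  obtain ⟨hm12, hd12⟩ := hfact a (2 * a) (by omega)
  obtain ⟨hm13, hd13⟩ := hfact (a ^ 2) (2 * a ^ 2) (by omega)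
  obtain ⟨hm21, hd21⟩ := hfact 1 (2 * a ^ 2) (by nlinarith)
  obtain ⟨hm22, hd22⟩ := hfact 2 a (by omega)
  obtain ⟨hm23, hd23⟩ := hfact (2 * a) (a ^ 2) (by nlinarith)
  have hmon1 : Monic p₁ := (hm11.mul hm12).mul hm13
  have hmon2 : Monic p₂ := (hm21.mul hm22).mul hm23
  have hdeg1 : p₁.natDegree = 2 + 2 * a + 2 * a ^ 2 := by
    rw [hp1_def, (hm11.mul hm12).natDegree_mul hm13, hm11.natDegree_mul hm12,
      hd11, hd12, hd13]
  have hdeg2 : p₂.natDegree = 2 * a ^ 2 + a + a ^ 2 := by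
    rw [hp2_def, (hm21.mul hm22).natDegree_mul hm23, hm21.natDegree_mul hm22,
      hd21, hd22, hd23]
  set p : K[X] := p₁ + p₂ with hp_def
  have hp2ne : p₂ ≠ 0 := hmon2.ne_zero
  have hp1ne : p₁ ≠ 0 := hmon1.ne_zero
  have hdegp : p.degree = p₂.degree := by
    apply degree_add_eq_right_of_degree_lt
    apply degree_lt_degree
    rw [hdeg1, hdeg2]
    nlinarith
  have hpne : p ≠ 0 := by
    intro h
    rw [h, degree_zero, eq_comm, degree_eq_bot] at hdegp
    exact hp2ne hdegp
  have hpnatdeg : p.natDegree = 3 * a ^ 2 + a := by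
    have := natDegree_eq_of_degree_eq (q := p₂) hdegp
    rw [this, hdeg2]; ring

  -- Frobenius expansions
  have hMsplit : ∀ w : K, w ^ M = w ^ 1 * w ^ a * w ^ (a ^ 2) := by
    intro w; rw [hM2, pow_add, pow_add]
  have hexp1 : ∀ c : K, (c ^ 2 + c ^ 1) ^ M = p₁.eval c := by
    intro c
    have h1 : (c ^ 2 + c ^ 1) ^ a = c ^ (2 * a) + c ^ a := by
      rw [frobA, ← pow_mul c 2 a, ← pow_mul c 1 a, one_mul]
    have h2 : (c ^ 2 + c ^ 1) ^ (a ^ 2) = c ^ (2 * a ^ 2) + c ^ (a ^ 2) := by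
      rw [frobA2, ← pow_mul c 2 (a ^ 2), ← pow_mul c 1 (a ^ 2), one_mul]
    rw [hMsplit, h1, h2, pow_one, hp1_def]
    simp only [eval_mul, eval_add, eval_pow, eval_X, pow_one]
  have hexp2 : ∀ c : K, (c ^ (2 * a ^ 2) + c ^ 1) ^ M = p₂.eval c := by
    intro c
    have h1 : (c ^ (2 * a ^ 2) + c ^ 1) ^ a = c ^ a + c ^ 2 := by
      rw [frobA, ← pow_mul c (2 * a ^ 2) a,
        show 2 * a ^ 2 * a = a ^ 3 * 2 from by ring, pow_mul c (a ^ 3) 2, hcardpow,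
        ← pow_mul c 1 a, one_mul]
      exact add_comm _ _
    have h2 : (c ^ (2 * a ^ 2) + c ^ 1) ^ (a ^ 2) = c ^ (a ^ 2) + c ^ (2 * a) := by
      rw [frobA2, ← pow_mul c (2 * a ^ 2) (a ^ 2),
        show 2 * a ^ 2 * a ^ 2 = a ^ 3 * (2 * a) from by ring, pow_mul c (a ^ 3) (2 * a),
        hcardpow, ← pow_mul c 1 (a ^ 2), one_mul]
      exact add_comm _ _
    rw [hMsplit, h1, h2, pow_one, hp2_def]
    simp only [eval_mul, eval_add, eval_pow, eval_X, pow_one]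

  -- bad set and choice of c
  set B1 : Finset K := univ.filter fun c : K => p.eval c = 0 with hB1_def
  set B2 : Finset K := univ.filter fun c : K => c ^ (a - 1) = 1 with hB2_def
  set B3 : Finset K := univ.filter fun c : K => c ^ 7 = 1 with hB3_def
  have hB1card : B1.card ≤ 3 * a ^ 2 + a := hpnatdeg ▸ card_root_filter p hpne
  have hB2card : B2.card ≤ a - 1 := by
    have hne : (X ^ (a - 1) - C 1 : K[X]) ≠ 0 := X_pow_sub_C_ne_zero (by omega) 1
    calc B2.card ≤ (univ.filter fun c : K => (X ^ (a - 1) - C 1 : K[X]).eval c = 0).card := by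
          apply card_le_card
          intro c hc
          rw [hB2_def, mem_filter] at hc
          rw [mem_filter]
          exact ⟨mem_univ _, by rw [eval_sub, eval_pow, eval_X, eval_C, sub_eq_zero, hc.2]⟩
      _ ≤ (X ^ (a - 1) - C 1 : K[X]).natDegree := card_root_filter _ hne
      _ = a - 1 := natDegree_X_pow_sub_C
  have hB3card : B3.card ≤ 7 := by
    have hne : (X ^ 7 - C 1 : K[X]) ≠ 0 := X_pow_sub_C_ne_zero (by omega) 1
    calc B3.card ≤ (univ.filter fun c : K => (X ^ 7 - C 1 : K[X]).eval c = 0).card := by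
          apply card_le_card
          intro c hc
          rw [hB3_def, mem_filter] at hc
          rw [mem_filter]
          exact ⟨mem_univ _, by rw [eval_sub, eval_pow, eval_X, eval_C, sub_eq_zero, hc.2]⟩
      _ ≤ (X ^ 7 - C 1 : K[X]).natDegree := card_root_filter _ hne
      _ = 7 := natDegree_X_pow_sub_C
  have hbad : ∃ c : K, c ∉ ({(0 : K)} : Finset K) ∪ B1 ∪ B2 ∪ B3 := by
    by_contra hcon
    push_neg at hcon
    have hsub : (univ : Finset K) ⊆ ({(0 : K)} : Finset K) ∪ B1 ∪ B2 ∪ B3 :=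
      fun c _ => hcon c
    have hcard := card_le_card hsub
    rw [card_univ, hq] at hcard
    have hle : (({(0 : K)} : Finset K) ∪ B1 ∪ B2 ∪ B3).card
        ≤ 1 + (3 * a ^ 2 + a) + (a - 1) + 7 := by
      calc (({(0 : K)} : Finset K) ∪ B1 ∪ B2 ∪ B3).card
          ≤ (({(0 : K)} : Finset K) ∪ B1 ∪ B2).card + B3.card := card_union_le _ _
        _ ≤ (({(0 : K)} : Finset K) ∪ B1).card + B2.card + B3.card := by
            have := card_union_le (({(0 : K)} : Finset K) ∪ B1) B2
            omega
        _ ≤ ({(0 : K)} : Finset K).card + B1.card + B2.card + B3.card := by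
            have := card_union_le ({(0 : K)} : Finset K) B1
            omega
        _ ≤ 1 + (3 * a ^ 2 + a) + (a - 1) + 7 := by
            have := card_singleton (0 : K)
            omega
    have h1 : a ^ 3 ≤ 3 * a ^ 2 + 2 * a + 7 := by omega
    have e2 : 4 * a ≤ a ^ 2 := by
      calc 4 * a ≤ a * a := Nat.mul_le_mul_right a ha
      _ = a ^ 2 := (sq a).symm
    have e1 : 4 * a ^ 2 ≤ a ^ 3 := by
      calc 4 * a ^ 2 ≤ a * a ^ 2 := Nat.mul_le_mul_right (a ^ 2) ha
      _ = a ^ 3 := by ring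
    omega
  obtain ⟨c, hc⟩ := hbad
  simp only [mem_union, mem_singleton, hB1_def, hB2_def, hB3_def, mem_filter, mem_univ,
    true_and, not_or] at hc
  obtain ⟨⟨⟨hc0, hcp⟩, hca⟩, hc7⟩ := hc
  have hc1 : c ≠ 1 := fun h => hc7 (by rw [h, one_pow])

  -- unit order arguments
  set u : Kˣ := Units.mk0 c hc0 with hu_def
  have huval : ∀ k : ℕ, ((u ^ k : Kˣ) : K) = c ^ k := by
    intro k; rw [Units.val_pow_eq_pow_val]; rfl
  have hu3 : u ^ (a ^ 3 - 1) = 1 :=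
    Units.ext (by rw [huval, Units.val_one]; exact hq1 c hc0)
  have hcomb : ∀ (k m d : ℕ) (x y : ℤ), u ^ k = 1 → u ^ m = 1 →
      (d : ℤ) = (k : ℤ) * x + (m : ℤ) * y → u ^ d = 1 := by
    intro k m d x y hk hm hd
    have hz : u ^ (d : ℤ) = 1 := by
      rw [hd, zpow_add, zpow_mul, zpow_mul, zpow_natCast, zpow_natCast, hk, hm,
        one_zpow, one_zpow, mul_one]
    rwa [zpow_natCast] at hz
  have hE : (e : ℤ) = 2 * (a : ℤ) ^ 2 - 1 := by
    rw [he2, Nat.cast_sub (by omega : 1 ≤ 2 * a ^ 2)]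
    push_cast; ring
  have hF : ((a ^ 3 - 1 : ℕ) : ℤ) = (a : ℤ) ^ 3 - 1 := by
    rw [Nat.cast_sub ha3]; push_cast; ring
  have hce : c ^ e ≠ 1 := by
    intro hceq
    have hue : u ^ e = 1 := Units.ext (by rw [huval, Units.val_one]; exact hceq)
    have h7 : u ^ 7 = 1 := by
      refine hcomb e (a ^ 3 - 1) 7 (1 + 2 * (a : ℤ) * ((a : ℤ) + 2))
        (-(4 * ((a : ℤ) + 2))) hue hu3 ?_
      rw [hE, hF]; ring
    exact hc7 (by rw [← huval, h7, Units.val_one])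
  have hgex : ∃ g : ℕ, a = 2 * g := by
    refine ⟨2 ^ (n - 1), ?_⟩
    rw [ha_def, ← pow_succ']
    congr 1
    omega
  obtain ⟨g, hg⟩ := hgex
  have hg' : ((a : ℕ) : ℤ) = 2 * (g : ℤ) := by exact_mod_cast congrArg (Nat.cast : ℕ → ℤ) hg
  have hcee : c ^ e ≠ c := by
    intro hceq
    have hcm : c ^ (e - 1) = 1 := by
      have h3 : c ^ (e - 1) * c = 1 * c := by
        rw [← pow_succ, show e - 1 + 1 = e by omega, hceq, one_mul]
      exact mul_right_cancel₀ hc0 h3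
    have hue : u ^ (e - 1) = 1 := Units.ext (by rw [huval, Units.val_one]; exact hcm)
    have he3 : ((e - 1 : ℕ) : ℤ) = 2 * (a : ℤ) ^ 2 - 2 := by
      rw [show e - 1 = 2 * a ^ 2 - 2 by omega, Nat.cast_sub (by omega : 2 ≤ 2 * a ^ 2)]
      push_cast; ring
    have ham : u ^ (a - 1) = 1 := by
      refine hcomb (a ^ 3 - 1) (e - 1) (a - 1) (1 - (a : ℤ) * ((a : ℤ) + 1))
        ((a : ℤ) * (g : ℤ) * ((a : ℤ) + 1)) hu3 hue ?_
      rw [hF, he3, Nat.cast_sub ha1, hg']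
      push_cast
      ring
    exact hca (by rw [← huval, ham, Units.val_one])

  -- the collision pair
  set t : K := (c ^ e - 1) / (c ^ e - c) with ht_def
  have hnum : c ^ e - 1 ≠ 0 := sub_ne_zero.mpr hce
  have hden : c ^ e - c ≠ 0 := sub_ne_zero.mpr hcee
  have ht0 : t ≠ 0 := div_ne_zero hnum hden
  have htdef : t * (c ^ e - c) = c ^ e - 1 := div_mul_cancel₀ _ hden
  have ht1 : t ≠ 1 := by
    intro h
    rw [h, one_mul] at htdef
    exact hc1 (sub_right_inj.mp htdef)
  have hct : c * t ≠ t := by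
    intro h
    apply hc1
    have : c * t = 1 * t := by rw [one_mul, h]
    exact mul_right_cancel₀ ht0 this
  have hct0 : c * t ≠ 0 := mul_ne_zero hc0 ht0
  have hkey : (1 - t) * c ^ e = 1 - c * t := by linear_combination -htdef
  have hcol : (1 - t) / t ^ e = (1 - c * t) / (c * t) ^ e := by
    rw [mul_pow, div_eq_div_iff (pow_ne_zero _ ht0)
      (mul_ne_zero (pow_ne_zero _ hc0) (pow_ne_zero _ ht0))]
    linear_combination t ^ e * hkey
  have hb1t : (1 - t) / t = (1 - c) / (c ^ e - 1) := by
    rw [div_eq_div_iff ht0 hnum]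
    linear_combination -htdef
  -- (H t)^M ≠ 1
  have hHt0 : (1 - t) / t ^ e ≠ 0 :=
    div_ne_zero (sub_ne_zero.mpr fun h => ht1 h.symm) (pow_ne_zero _ ht0)
  have he4 : e + 1 = 2 * a ^ 2 := by omega
  have hHtM : ((1 - t) / t ^ e) ^ M ≠ 1 := by
    intro heq
    rw [hHM t ht0, ← div_pow, hb1t, div_pow, div_eq_one_iff_eq (pow_ne_zero _ hnum)] at heq
    -- (1-c)^M = (c^e - 1)^M ; multiply by c^M
    have hmul : ((1 - c) * c) ^ M = ((c ^ e - 1) * c) ^ M := by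
      rw [mul_pow, mul_pow, heq]
    have h1 : (1 - c) * c = c ^ 2 + c ^ 1 := by
      have : (1 - c) * c = c - c ^ 2 := by ring
      rw [this, pow_one]
      linear_combination (-(c ^ 2)) * h2
    have h1' : (c ^ e - 1) * c = c ^ (2 * a ^ 2) + c ^ 1 := by
      rw [sub_mul, ← pow_succ, he4, one_mul, pow_one]
      linear_combination (-c) * h2
    rw [h1, h1', hexp1, hexp2] at hmul
    apply hcp
    have : eval c p = eval c p₁ + eval c p₂ := by rw [hp_def, eval_add]
    rw [this, hmul]
    linear_combination (eval c p₂) * h2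

  -- counting
  set Vset := univ.filter fun v : K => v ^ M = 1 with hV_def
  have hVcard : Vset.card = M := by
    refine card_pow_filter M hMpos ⟨a - 1, ?_⟩
    rw [hq, hM2]
    zify [ha1, ha3]
    ring
  set Wset := insert (0 : K) (Vset.erase 1) with hW_def
  have h1V : (1 : K) ∈ Vset := mem_filter.mpr ⟨mem_univ _, one_pow M⟩
  have h0W : (0 : K) ∉ Vset.erase 1 := by
    intro h
    have := (mem_filter.mp (mem_of_mem_erase h)).2
    rw [zero_pow (by omega : M ≠ 0)] at this
    exact zero_ne_one this
  have hWcard : Wset.card = M := by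
    rw [hW_def, card_insert_of_notMem h0W, card_erase_of_mem h1V, hVcard]
    omega
  have hvt : ∀ v : K, (1 : K) - v ≠ 0 → 1 - (1 - v)⁻¹ = v * (1 - v)⁻¹ := by
    intro v hv
    have hvi := mul_inv_cancel₀ hv
    linear_combination -hvi - v * (1 - v)⁻¹ * h2
  set Pset := univ.filter (fun s : K => s ≠ 0 ∧ (s = 1 ∨ (1 - s) ^ M = s ^ M)) with hP_def
  have hPcard : Pset.card = M := by
    rw [← hWcard]
    apply card_nbij' (i := fun s : K => (1 - s) / s) (j := fun v : K => (1 - v)⁻¹)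
    · intro s hs
      obtain ⟨-, hs0, hscase⟩ := mem_filter.mp hs
      by_cases hs1 : s = 1
      · subst hs1; simp [hW_def]
      · have hMe : (1 - s) ^ M = s ^ M := hscase.resolve_left hs1
        rw [hW_def]
        apply mem_insert_of_mem
        refine mem_erase.mpr ⟨?_, mem_filter.mpr ⟨mem_univ _, ?_⟩⟩
        · intro hv1
          rw [div_eq_one_iff_eq hs0] at hv1
          have : (1 : K) = 0 := by linear_combination hv1 + s * h2
          exact one_ne_zero this
        · rw [div_pow, hMe, div_self (pow_ne_zero _ hs0)]
    · intro v hv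
      rw [hW_def] at hv
      rcases mem_insert.mp hv with hv0 | hvm
      · subst hv0
        have h00 : ((1 : K) - 0)⁻¹ = 1 := by norm_num
        beta_reduce
        rw [h00]
        exact mem_filter.mpr ⟨mem_univ _, one_ne_zero, Or.inl rfl⟩
      · obtain ⟨hv1, hvV⟩ := mem_erase.mp hvm
        have hvM := (mem_filter.mp hvV).2
        have h1v : (1 : K) - v ≠ 0 := sub_ne_zero.mpr fun h => hv1 h.symm
        refine mem_filter.mpr ⟨mem_univ _, inv_ne_zero h1v, Or.inr ?_⟩
        rw [hvt v h1v, mul_pow, hvM, one_mul]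
    · intro s hs
      obtain ⟨-, hs0, -⟩ := mem_filter.mp hs
      have hkey2 : 1 - (1 - s) / s = s⁻¹ := by
        field_simp
        linear_combination (s - 1) * h2
      beta_reduce
      rw [hkey2, inv_inv]
    · intro v hv
      rw [hW_def] at hv
      rcases mem_insert.mp hv with hv0 | hvm
      · subst hv0; norm_num
      · obtain ⟨hv1, hvV⟩ := mem_erase.mp hvm
        have h1v : (1 : K) - v ≠ 0 := sub_ne_zero.mpr fun h => hv1 h.symm
        beta_reduce
        rw [hvt v h1v, mul_div_assoc, div_self (inv_ne_zero h1v), mul_one]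
  set Sset := univ.filter
    (fun s : K => s ≠ 0 ∧ (1 - s) / s ^ e ≠ 0 ∧ ((1 - s) / s ^ e) ^ M ≠ 1) with hS_def
  have hSeq : Sset = (univ.filter fun s : K => s ≠ 0) \ Pset := by
    ext s
    simp only [hS_def, hP_def, mem_sdiff, mem_filter, mem_univ, true_and]
    constructor
    · rintro ⟨hs0, hH0, hHM1⟩
      refine ⟨hs0, ?_⟩
      rintro ⟨-, hcase⟩
      rcases hcase with hs1 | hMe
      · subst hs1; exact hH0 (by simp)
      · apply hHM1
        rw [hHM s hs0, hMe, div_self (pow_ne_zero _ hs0)]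
    · rintro ⟨hs0, hnP⟩
      push_neg at hnP
      obtain ⟨hs1, hMe⟩ := hnP hs0
      refine ⟨hs0, div_ne_zero (sub_ne_zero.mpr fun h => hs1 h.symm) (pow_ne_zero _ hs0), ?_⟩
      rw [hHM s hs0]
      intro hdiv
      exact hMe (by rwa [div_eq_one_iff_eq (pow_ne_zero _ hs0)] at hdiv)
  have hPsub : Pset ⊆ univ.filter fun s : K => s ≠ 0 := by
    intro s hs
    exact mem_filter.mpr ⟨mem_univ _, (mem_filter.mp hs).2.1⟩
  have hfilter0 : (univ.filter fun s : K => s ≠ 0).card = a ^ 3 - 1 := by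
    rw [filter_ne', card_erase_of_mem (mem_univ _), card_univ, hq]
  have hScard : Sset.card = a ^ 3 - 1 - M := by
    rw [hSeq, card_sdiff_of_subset hPsub, hfilter0, hPcard]
  set Bset := univ.filter (fun b : K => b ≠ 0 ∧ b ^ M ≠ 1) with hB_def
  have hVsub : Vset ⊆ univ.filter fun s : K => s ≠ 0 := by
    intro v hv
    refine mem_filter.mpr ⟨mem_univ _, ?_⟩
    intro h0
    have := (mem_filter.mp hv).2
    rw [h0, zero_pow (by omega : M ≠ 0)] at this
    exact zero_ne_one this
  have hBeq : Bset = (univ.filter fun s : K => s ≠ 0) \ Vset := by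
    ext b
    simp only [hB_def, hV_def, mem_sdiff, mem_filter, mem_univ, true_and]
    try tauto
  have hBcard : Bset.card = a ^ 3 - 1 - M := by
    rw [hBeq, card_sdiff_of_subset hVsub, hfilter0, hVcard]
  -- the image misses some b in Bset
  have htS : t ∈ Sset := mem_filter.mpr ⟨mem_univ _, ht0, hHt0, hHtM⟩
  have hctS : c * t ∈ Sset := by
    refine mem_filter.mpr ⟨mem_univ _, hct0, ?_, ?_⟩
    · rw [← hcol]; exact hHt0
    · rw [← hcol]; exact hHtM
  set img := Sset.image (fun s : K => (1 - s) / s ^ e) with himg_def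
  have himg_eq : img = (Sset.erase (c * t)).image (fun s : K => (1 - s) / s ^ e) := by
    apply Subset.antisymm
    · intro b hb
      obtain ⟨s, hs, rfl⟩ := mem_image.mp hb
      by_cases hsct : s = c * t
      · subst hsct
        exact mem_image.mpr ⟨t, mem_erase.mpr ⟨fun h => hct h.symm, htS⟩, hcol⟩
      · exact mem_image.mpr ⟨s, mem_erase.mpr ⟨hsct, hs⟩, rfl⟩
    · exact image_subset_image (erase_subset _ _)
  have hBpos : 1 ≤ a ^ 3 - 1 - M := by
    have e2' : 4 * a ≤ a ^ 2 := by
      calc 4 * a ≤ a * a := Nat.mul_le_mul_right a ha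
      _ = a ^ 2 := (sq a).symm
    have e1' : 4 * a ^ 2 ≤ a ^ 3 := by
      calc 4 * a ^ 2 ≤ a * a ^ 2 := Nat.mul_le_mul_right (a ^ 2) ha
      _ = a ^ 3 := by ring
    omega
  have himglt : img.card < Bset.card := by
    rw [himg_eq, hBcard]
    calc ((Sset.erase (c * t)).image fun s : K => (1 - s) / s ^ e).card
        ≤ (Sset.erase (c * t)).card := card_image_le
      _ = Sset.card - 1 := by rw [card_erase_of_mem hctS]
      _ < a ^ 3 - 1 - M := by rw [hScard]; omega
  have hnsub : ¬ Bset ⊆ img := fun hsub => absurd (card_le_card hsub) (not_le.mpr himglt)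
  obtain ⟨b, hbB, hbimg⟩ := not_subset.mp hnsub
  obtain ⟨-, hb0, hbM⟩ := mem_filter.mp hbB
  refine ⟨b, hb0, hbM, ?_⟩
  intro s hs0 heqb
  apply hbimg
  rw [himg_def]
  refine mem_image.mpr ⟨s, ?_, heqb⟩
  refine mem_filter.mpr ⟨mem_univ _, hs0, ?_, ?_⟩
  · rw [heqb]; exact hb0
  · rw [heqb]; exact hbM
end

section
/- Let V = V_1 ⊕ ... ⊕ V_m be a direct sum decomposition of a GF(q^t)-vector space V, with dim V_i = s_i ≥ 2. For each i, let U_i be an F_q-subspace of V_i such that L_{U_i} is a scattered F_q-linear set of PG(V_i, GF(q^t)). Then W = U_1 ⊕ ... ⊕ U_m defines a scattered F_q-linear set L_W of PG(V, GF(q^t)). -/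
/-- Theorem 5.1 of the paper, first part: if V = V₁ ⊕ ... ⊕ V_m
over GF(q^t) and each L_{U_i} is scattered, then W = U₁ ⊕ ... ⊕ U_m defines a
scattered F_q-linear set of PG(V, GF(q^t)).  The direct sum is modelled as the
product Π i, V i. -/
theorem stmt13 (q t m : ℕ) (hq : IsPrimePow q) (ht : 1 ≤ t)
    (K : Type*) [Field K] [Fintype K] (hK : Nat.card K = q ^ t)
    (Fq : Subfield K) (hFq : Nat.card Fq = q)
    (V : Fin m → Type*) [∀ i, AddCommGroup (V i)] [∀ i, Module K (V i)]
    (s : Fin m → ℕ) (hs : ∀ i, 2 ≤ s i)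
    (hdim : ∀ i, Module.finrank K (V i) = s i)
    (U : ∀ i, Set (V i))
    (hU0 : ∀ i, (0 : V i) ∈ U i)
    (hUadd : ∀ i, ∀ u ∈ U i, ∀ v ∈ U i, u + v ∈ U i)
    (hUsmul : ∀ i, ∀ c ∈ Fq, ∀ u ∈ U i, (c : K) • u ∈ U i)
    (hscatt : ∀ i, ∀ u ∈ U i, u ≠ 0 → ∀ v ∈ U i, v ≠ 0 →
      ∀ l : K, v = l • u → l ∈ Fq) :
    ∀ w ∈ {w : ∀ i, V i | ∀ i, w i ∈ U i}, w ≠ 0 →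
      ∀ w' ∈ {w : ∀ i, V i | ∀ i, w i ∈ U i}, w' ≠ 0 →
        ∀ l : K, w' = l • w → l ∈ Fq := by
  intro w hw hw0 w' hw' hw'0 l hl
  obtain ⟨i, hi⟩ : ∃ i, w i ≠ 0 := by
    by_contra h
    push_neg at h
    exact hw0 (funext h)
  have hl0 : l ≠ 0 := by
    rintro rfl
    exact hw'0 (by simp [hl])
  have : w' i = l • w i := by rw [hl]; rfl
  exact hscatt i (w i) (hw i) hi (w' i) (hw' i)
    (by rw [this]; exact smul_ne_zero hl0 hi) l this
end

section
/- Let q = 2^t with t > 1, and let G be an additive subgroup of GF(q)^r. The point set K_G = { P_v : v ∈ G } in AG(r, q) is a cap (no three points collinear) if and only if any two distinct nonzero vectors of G are GF(q)-linearly independent. -/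
/-- characterization of translation caps, \cite[Lemma 2.1]{Giulietti2007}:
for q = 2^t and an additive subgroup G of GF(q)^r, the point set K_G is a cap of
AG(r,q) iff any two distinct nonzero vectors of G are GF(q)-linearly independent. -/
theorem stmt15 (t r : ℕ) (ht : 1 < t)
    (K : Type*) [Field K] [Fintype K] (hK : Nat.card K = 2 ^ t)
    (G : AddSubgroup (Fin r → K)) :
    (∀ a ∈ G, ∀ b ∈ G, ∀ c ∈ G, a ≠ b → b ≠ c → a ≠ c →
        ¬ Collinear K ({a, b, c} : Set (Fin r → K))) ↔
    (∀ u ∈ G, ∀ v ∈ G, u ≠ 0 → v ≠ 0 → u ≠ v → LinearIndependent K ![u, v]) := by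
  constructor
  · intro hcap u hu v hv hu0 hv0 huv
    rw [LinearIndependent.pair_iff' hu0]
    intro a ha
    apply hcap 0 G.zero_mem u hu v hv (Ne.symm hu0) huv (Ne.symm hv0)
    rw [collinear_iff_of_mem (Set.mem_insert 0 _)]
    refine ⟨u, fun p hp => ?_⟩
    rcases hp with h | h | h
    · exact ⟨0, by simp [h]⟩
    · exact ⟨1, by simp [h]⟩
    · exact ⟨a, by simp at h; simp [h, ← ha]⟩
  · intro hind a ha b hb c hc hab hbc hac hcol
    rw [collinear_iff_of_mem (Set.mem_insert a _)] at hcol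
    obtain ⟨d, hd⟩ := hcol
    obtain ⟨r₁, hr₁⟩ := hd b (by simp)
    obtain ⟨r₂, hr₂⟩ := hd c (by simp)
    have hu : b - a = r₁ • d := by simp [hr₁]
    have hv : c - a = r₂ • d := by simp [hr₂]
    have hr₁0 : r₁ ≠ 0 := by
      rintro rfl
      exact hab (by simp [sub_eq_zero] at hu; exact hu.symm)
    have hli := hind (b - a) (G.sub_mem hb ha) (c - a) (G.sub_mem hc ha)
      (sub_ne_zero.mpr (Ne.symm hab)) (sub_ne_zero.mpr (Ne.symm hac))
      (fun h => hbc (by rwa [sub_left_inj] at h))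
    rw [LinearIndependent.pair_iff' (sub_ne_zero.mpr (Ne.symm hab))] at hli
    exact hli (r₂ / r₁) (by rw [hu, hv, smul_smul, div_mul_cancel₀ _ hr₁0])
end

section
/- Let t > 1. An F_2-subspace U of GF(2^t)^r defines a scattered F_2-linear set L_U in PG(r-1, 2^t) if and only if K_U = { P_v : v ∈ U } is a translation cap in AG(r, 2^t). -/
/-- Proposition 5.4 of the paper: an F_2-subspace U of GF(2^t)^r
defines a scattered F_2-linear set (distinct nonzero vectors span distinct lines)
iff K_U is a translation cap in AG(r, 2^t) (no three points collinear). -/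
theorem stmt16 (t r : ℕ) (ht : 1 < t)
    (K : Type*) [Field K] [Fintype K] (hK : Nat.card K = 2 ^ t)
    (U : AddSubgroup (Fin r → K)) :
    (∀ u ∈ U, ∀ v ∈ U, u ≠ 0 → v ≠ 0 → u ≠ v → ∀ l : K, v ≠ l • u) ↔
    (∀ a ∈ U, ∀ b ∈ U, ∀ c ∈ U, a ≠ b → b ≠ c → a ≠ c →
        ¬ Collinear K ({a, b, c} : Set (Fin r → K))) := by
  constructor
  · intro h a ha b hb c hc hab hbc hac hcol
    rw [collinear_iff_of_mem (Set.mem_insert a _)] at hcol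
    obtain ⟨w, hw⟩ := hcol
    obtain ⟨cb, hcb⟩ := hw b (by simp)
    obtain ⟨cc, hcc⟩ := hw c (by simp)
    have hcc0 : cc ≠ 0 := by
      rintro rfl
      simp at hcc
      exact hac hcc.symm
    refine h (c - a) (U.sub_mem hc ha) (b - a) (U.sub_mem hb ha)
      (sub_ne_zero.mpr (Ne.symm hac)) (sub_ne_zero.mpr (Ne.symm hab))
      (fun hh => hbc (by have := sub_left_injective hh; exact this.symm)) (cb / cc) ?_
    have h1 : b - a = cb • w := by rw [hcb]; simp [vadd_eq_add]
    have h2 : c - a = cc • w := by rw [hcc]; simp [vadd_eq_add]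
    rw [h1, h2, smul_smul, div_mul_cancel₀ _ hcc0]
  · intro h u hu v hv hu0 hv0 huv l hvl
    refine h 0 U.zero_mem v hv u hu (Ne.symm hv0) (Ne.symm huv) (Ne.symm hu0) ?_
    rw [collinear_iff_of_mem (Set.mem_insert 0 _)]
    refine ⟨u, fun p hp => ?_⟩
    rcases hp with rfl | rfl | rfl
    · exact ⟨0, by simp⟩
    · exact ⟨l, by simp [hvl]⟩
    · exact ⟨1, by simp⟩
end
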